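/- arXiv:0704.3417 — 3 statements merged into one kernel-verified Lean document; each statement's English description precedes it below -/
import Mathlib

section
/- Let β ∈ Δ_lg, α ∈ −Δ_lg and γ ∈ Φ⁺. Then β →_γ α holds if and only if either (i) α = −β and γ = β, in which case ⟨β,γ∨⟩ = 2, or (ii) β + (−α) is a root and γ = β + (−α), in which case ⟨β,γ∨⟩ = 1. -/
open scoped RealInnerProductSpace Classical

noncomputable section

variable {V : Type} [NormedAddCommGroup V] [InnerProductSpace ℝ V] [FiniteDimensional ℝ V]

/-- The orthogonal reflection of `V` in the hyperplane orthogonal to `α`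
(the reflection `s_α` when `α` is a root). -/
def sref (α : V) : V ≃ₗᵢ[ℝ] V := Submodule.reflection (Submodule.span ℝ {α})ᗮ

/-- The pairing `⟨β, γ∨⟩ = 2(β|γ)/(γ|γ)` of a vector with the coroot of `γ`. -/
def cpair (β γ : V) : ℝ := 2 * ⟪β, γ⟫ / ⟪γ, γ⟫

/-- An irreducible reduced (crystallographic) root system in the real inner product
space `V`, the inner product being invariant under the Weyl group (automatic, since
reflections are isometries), normalized so that the shortest roots have squared length `1`. -/
structure NRootSystem (V : Type) [NormedAddCommGroup V] [InnerProductSpace ℝ V]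
    [FiniteDimensional ℝ V] where
  Φ : Finset V
  nonempty : Φ.Nonempty
  zero_not_mem : (0 : V) ∉ Φ
  span_eq_top : Submodule.span ℝ (Φ : Set V) = ⊤
  reduced : ∀ α ∈ Φ, ∀ t : ℝ, t • α ∈ Φ → t = 1 ∨ t = -1
  pairing_int : ∀ α ∈ Φ, ∀ β ∈ Φ, ∃ n : ℤ, 2 * ⟪β, α⟫ = n * ⟪α, α⟫
  reflect_mem : ∀ α ∈ Φ, ∀ β ∈ Φ, sref α β ∈ Φ
  irreducible : ∀ S : Finset V, S ⊆ Φ → S.Nonempty → (Φ \ S).Nonempty →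
    ∃ α ∈ S, ∃ β ∈ Φ \ S, ⟪α, β⟫ ≠ 0
  norm_one_le : ∀ α ∈ Φ, 1 ≤ ⟪α, α⟫
  exists_norm_one : ∃ α ∈ Φ, ⟪α, α⟫ = 1

namespace NRootSystem

variable (R : NRootSystem V)

/-- `r`, the maximal squared length of a root. -/
def r : ℝ := R.Φ.sup' R.nonempty fun α => ⟪α, α⟫

/-- long roots -/
def IsLong (α : V) : Prop := α ∈ R.Φ ∧ ⟪α, α⟫ = R.r

/-- short roots -/
def IsShort (α : V) : Prop := α ∈ R.Φ ∧ ⟪α, α⟫ < R.r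

/-- The Weyl group `W`, generated by the reflections in the roots. -/
def Weyl : Subgroup (V ≃ₗᵢ[ℝ] V) := Subgroup.closure (sref '' (R.Φ : Set V))

end NRootSystem

/-- The standard parabolic subgroup `W_I` generated by the reflections in `I ⊆ Δ`. -/
def WeylP (I : Finset V) : Subgroup (V ≃ₗᵢ[ℝ] V) := Subgroup.closure (sref '' (I : Set V))

/-- A base (set of simple roots) `Δ` of the root system, together with the
integral coordinates `coeff γ α` of each root `γ` in the basis `Δ`; every root is a
nonnegative or a nonpositive integral combination of the simple roots. -/
structure Base {V : Type} [NormedAddCommGroup V] [InnerProductSpace ℝ V]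
    [FiniteDimensional ℝ V] (R : NRootSystem V) where
  Δ : Finset V
  subset : Δ ⊆ R.Φ
  indep : LinearIndependent ℝ (fun a : {x : V // x ∈ Δ} => (a : V))
  coeff : V → V → ℤ
  coeff_spec : ∀ γ ∈ R.Φ, γ = ∑ α ∈ Δ, (coeff γ α : ℝ) • α
  coeff_sign : ∀ γ ∈ R.Φ, (∀ α ∈ Δ, 0 ≤ coeff γ α) ∨ (∀ α ∈ Δ, coeff γ α ≤ 0)

namespace Base

variable {R : NRootSystem V} (B : Base R)

/-- positive roots -/
def IsPos (γ : V) : Prop := γ ∈ R.Φ ∧ ∀ α ∈ B.Δ, 0 ≤ B.coeff γ α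

/-- negative roots -/
def IsNeg (γ : V) : Prop := γ ∈ R.Φ ∧ ∀ α ∈ B.Δ, B.coeff γ α ≤ 0

/-- the height of a root -/
def ht (γ : V) : ℤ := ∑ α ∈ B.Δ, B.coeff γ α

/-- the dual height `ht∨ γ = ht (γ∨)`: the height of the coroot `γ∨ = 2γ/(γ|γ)`
with respect to the basis of simple coroots `α∨ = 2α/(α|α)`, `α ∈ Δ`. -/
def htv (γ : V) : ℝ := ∑ α ∈ B.Δ, (B.coeff γ α : ℝ) * ⟪α, α⟫ / ⟪γ, γ⟫

/-- The length of `w`: the minimal length of an expression of `w` as a product of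
simple reflections. -/
def len (w : V ≃ₗᵢ[ℝ] V) : ℕ :=
  sInf {n | ∃ g : Fin n → V, (∀ i, g i ∈ B.Δ) ∧ w = (List.ofFn fun i => sref (g i)).prod}

/-- `w` is the longest element of the subgroup `H`. -/
def IsLongest (H : Subgroup (V ≃ₗᵢ[ℝ] V)) (w : V ≃ₗᵢ[ℝ] V) : Prop :=
  w ∈ H ∧ ∀ u ∈ H, B.len u ≤ B.len w

/-- `X_I = {w ∈ W | w(Φ_I⁺) ⊆ Φ⁺}`, the set of minimal length coset
representatives of `W/W_I`. -/
def XI (I : Finset V) : Set (V ≃ₗᵢ[ℝ] V) :=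
  {w | w ∈ R.Weyl ∧
    ∀ γ, γ ∈ R.Φ → γ ∈ Submodule.span ℝ (I : Set V) → B.IsPos γ → B.IsPos (w γ)}

/-- `h` is the highest root. -/
def IsHighest (h : V) : Prop :=
  h ∈ R.Φ ∧ ∀ γ ∈ R.Φ, ∀ α ∈ B.Δ, B.coeff γ α ≤ B.coeff h α

/-- `Ĩ = {α ∈ Δ | (h|α) = 0}`, the simple roots orthogonal to the highest root `h`. -/
def Itil (h : V) : Finset V := B.Δ.filter fun α => ⟪h, α⟫ = 0

/-- The level `L(α)` of a long root `α`, where `h` is the highest root: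
`L(α) = ht∨(h) − ht∨(α)` if `α > 0` and `L(α) = ht∨(h) − ht∨(α) − 1` if `α < 0`. -/
def level (h α : V) : ℝ :=
  if B.IsPos α then B.htv h - B.htv α else B.htv h - B.htv α - 1

/-- The elementary step relation `β →_γ α` on long roots (`γ` a positive root):
`α = s_γ(β)` and `L(α) = L(β) + 1`. -/
def Step (h γ β α : V) : Prop :=
  R.IsLong β ∧ R.IsLong α ∧ B.IsPos γ ∧ α = sref γ β ∧
    B.level h α = B.level h β + 1

/-- `g` is the sequence of positive roots of a path
`β = β₀ →_{g 0} β₁ →_{g 1} ⋯ →_{g (n-1)} β_n = α` from `β` to `α`. -/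
def IsPathWord (h : V) {n : ℕ} (g : Fin n → V) (β α : V) : Prop :=
  ∃ c : Fin (n + 1) → V, c 0 = β ∧ c (Fin.last n) = α ∧
    ∀ i : Fin n, B.Step h (g i) (c i.castSucc) (c i.succ)

/-- a path all of whose steps use simple roots -/
def IsSimplePathWord (h : V) {n : ℕ} (g : Fin n → V) (β α : V) : Prop :=
  B.IsPathWord h g β α ∧ ∀ i, g i ∈ B.Δ

/-- there is a path from `β` to `α`, i.e. `α ⪯ β` -/
def HasPath (h β α : V) : Prop := ∃ (n : ℕ) (g : Fin n → V), B.IsPathWord h g β α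

/-- there is a simple path from `β` to `α` -/
def HasSimplePath (h β α : V) : Prop :=
  ∃ (n : ℕ) (g : Fin n → V), B.IsSimplePathWord h g β α

/-- The covering relation `w →_γ w'` for the Bruhat order:
`w' = s_γ w` and `l(w') = l(w) + 1`, for a positive root `γ`. -/
def BStep (γ : V) (w w' : V ≃ₗᵢ[ℝ] V) : Prop :=
  B.IsPos γ ∧ w' = sref γ * w ∧ B.len w' = B.len w + 1

/-- The Bruhat order on `W`: the reflexive–transitive closure of the covering
relations. -/
def bruhatLE : (V ≃ₗᵢ[ℝ] V) → (V ≃ₗᵢ[ℝ] V) → Prop :=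
  Relation.ReflTransGen fun w w' => ∃ γ, B.BStep γ w w'

/-- `x` is an element of `W` with `x(β) = α` of the minimal possible length
`|L(α) − L(β)|` (this is the element `x_{αβ}` when it exists). -/
def MinTake (h β α : V) (x : V ≃ₗᵢ[ℝ] V) : Prop :=
  x ∈ R.Weyl ∧ x β = α ∧ (B.len x : ℝ) = |B.level h α - B.level h β|

/-- `g` is a reduced expression of `x` as a product of simple reflections. -/
def IsReducedWord {n : ℕ} (g : Fin n → V) (x : V ≃ₗᵢ[ℝ] V) : Prop :=
  (∀ i, g i ∈ B.Δ) ∧ x = (List.ofFn fun i => sref (g i)).prod ∧ n = B.len x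

/-- The depth of a positive root `β`: the minimal integer `k` such that there is an
element `w` of `W` of length `k` with `w(β) < 0`. -/
def depth (β : V) : ℕ := sInf {n | ∃ w ∈ R.Weyl, B.len w = n ∧ B.IsNeg (w β)}

end Base

section AuxLemmas

variable {R : NRootSystem V} (B : Base R)

lemma sref_apply_formula (γ v : V) : sref γ v = v - (2 * ⟪γ, v⟫ / ⟪γ, γ⟫) • γ := by
  have h := Submodule.reflection_orthogonal_apply (𝕜 := ℝ) (K := Submodule.span ℝ {γ}) v
  rw [sref, h, Submodule.reflection_singleton_apply]
  simp only [RCLike.ofReal_real_eq_id, id]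
  rw [show ‖γ‖ ^ 2 = ⟪γ, γ⟫ from (real_inner_self_eq_norm_sq γ).symm,
    neg_sub, two_smul, ← two_smul ℝ, smul_smul, mul_div_assoc]

lemma indep_ext (c d : V → ℝ)
    (hcd : ∑ δ ∈ B.Δ, c δ • δ = ∑ δ ∈ B.Δ, d δ • δ) : ∀ δ ∈ B.Δ, c δ = d δ := by
  have h0 : ∑ i : {x : V // x ∈ B.Δ}, (c (i : V) - d (i : V)) • (i : V) = 0 := by
    rw [Finset.sum_coe_sort B.Δ (fun δ => (c δ - d δ) • δ)]
    simp only [sub_smul, Finset.sum_sub_distrib, hcd, sub_self]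
  have hz := Fintype.linearIndependent_iff.mp B.indep (fun i => c (i : V) - d (i : V)) h0
  intro δ hδ
  have := hz ⟨δ, hδ⟩
  simp only [sub_eq_zero] at this
  exact this

lemma coeff_eq (c : V → ℝ) {γ : V} (hγ : γ ∈ R.Φ)
    (hc : γ = ∑ δ ∈ B.Δ, c δ • δ) : ∀ δ ∈ B.Δ, (B.coeff γ δ : ℝ) = c δ :=
  indep_ext B _ c ((B.coeff_spec γ hγ).symm.trans hc)

lemma coeff_of_simple {β : V} (hβ : β ∈ B.Δ) :
    ∀ δ ∈ B.Δ, (B.coeff β δ : ℝ) = if δ = β then 1 else 0 :=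
  coeff_eq B _ (B.subset hβ) (by
    simp only [ite_smul, one_smul, zero_smul]
    rw [Finset.sum_ite_eq' B.Δ β (fun δ => δ), if_pos hβ])

lemma coeff_of_neg_simple {α : V} (hα : -α ∈ B.Δ) (hαΦ : α ∈ R.Φ) :
    ∀ δ ∈ B.Δ, (B.coeff α δ : ℝ) = if δ = -α then -1 else 0 :=
  coeff_eq B _ hαΦ (by
    simp only [ite_smul, neg_smul, one_smul, zero_smul]
    rw [Finset.sum_ite_eq' B.Δ (-α) (fun δ => -δ), if_pos hα, neg_neg])

lemma isPos_of_simple {β : V} (hβ : β ∈ B.Δ) : B.IsPos β := by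
  refine ⟨B.subset hβ, fun δ hδ => ?_⟩
  have h := coeff_of_simple B hβ δ hδ
  have : (0:ℝ) ≤ (B.coeff β δ : ℝ) := by rw [h]; split <;> norm_num
  exact_mod_cast this

lemma not_isPos_of_neg_simple {α : V} (hα : -α ∈ B.Δ) (hαΦ : α ∈ R.Φ) : ¬ B.IsPos α := by
  intro hp
  have h := coeff_of_neg_simple B hα hαΦ (-α) hα
  rw [if_pos rfl] at h
  have h' : B.coeff α (-α) = -1 := by exact_mod_cast h
  have := hp.2 (-α) hα
  omega

lemma htv_simple {β : V} (hβ : β ∈ B.Δ) : B.htv β = 1 := by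
  have hne : ⟪β, β⟫ ≠ 0 := by
    have := R.norm_one_le β (B.subset hβ); linarith
  have hterm : ∀ δ ∈ B.Δ, (B.coeff β δ : ℝ) * ⟪δ, δ⟫ / ⟪β, β⟫ =
      if δ = β then 1 else 0 := by
    intro δ hδ
    rw [coeff_of_simple B hβ δ hδ]
    split
    · rename_i hd; subst hd; field_simp
    · simp
  rw [Base.htv, Finset.sum_congr rfl hterm, Finset.sum_ite_eq' B.Δ β (fun _ => (1:ℝ)),
    if_pos hβ]

lemma htv_neg_simple {α : V} (hα : -α ∈ B.Δ) (hαΦ : α ∈ R.Φ) : B.htv α = -1 := by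
  have hne : ⟪α, α⟫ ≠ 0 := by
    have := R.norm_one_le α hαΦ; linarith
  have hterm : ∀ δ ∈ B.Δ, (B.coeff α δ : ℝ) * ⟪δ, δ⟫ / ⟪α, α⟫ =
      if δ = -α then -1 else 0 := by
    intro δ hδ
    rw [coeff_of_neg_simple B hα hαΦ δ hδ]
    split
    · rename_i hd; subst hd; rw [inner_neg_neg]; field_simp
    · simp
  rw [Base.htv, Finset.sum_congr rfl hterm, Finset.sum_ite_eq' B.Δ (-α) (fun _ => (-1:ℝ)),
    if_pos hα]

end AuxLemmas

/-- let `β ∈ Δ_lg`, `α ∈ −Δ_lg` and `γ ∈ Φ⁺`. Then `β →_γ α` if and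
only if either (i) `α = −β` and `γ = β`, in which case `⟨β,γ∨⟩ = 2`, or
(ii) `β + (−α)` is a root and `γ = β + (−α)`, in which case `⟨β,γ∨⟩ = 1`. -/
theorem step_from_simple_to_neg_simple (R : NRootSystem V) (B : Base R) {h : V}
    (hh : B.IsHighest h) {β α γ : V}
    (hβ : β ∈ B.Δ) (hβl : R.IsLong β) (hα : -α ∈ B.Δ) (hαl : R.IsLong α)
    (hγ : B.IsPos γ) :
    B.Step h γ β α ↔
      ((α = -β ∧ γ = β ∧ cpair β γ = 2) ∨
       (β + (-α) ∈ R.Φ ∧ γ = β + (-α) ∧ cpair β γ = 1)) := by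
  have hβΦ : β ∈ R.Φ := hβl.1
  have hαΦ : α ∈ R.Φ := hαl.1
  have hγΦ : γ ∈ R.Φ := hγ.1
  have hγγ : ⟪γ, γ⟫ ≠ 0 := by have := R.norm_one_le γ hγΦ; linarith
  constructor
  · rintro ⟨-, -, -, heq, -⟩
    obtain ⟨n, hn⟩ := R.pairing_int γ hγΦ β hβΦ
    have hsub : β - α = (n : ℝ) • γ := by
      rw [heq, sref_apply_formula, real_inner_comm β γ, hn, mul_div_assoc,
        div_self hγγ, mul_one]
      abel
    have hcpair : cpair β γ = (n : ℝ) := by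
      rw [cpair, hn, mul_div_assoc, div_self hγγ, mul_one]
    have key : ∀ δ ∈ B.Δ, (n:ℝ) * (B.coeff γ δ : ℝ) =
        (if δ = β then 1 else 0) + (if δ = -α then 1 else 0) := by
      apply indep_ext B
      rw [Finset.sum_congr rfl (fun δ _ => mul_smul (n:ℝ) ((B.coeff γ δ : ℝ)) δ),
        ← Finset.smul_sum, ← B.coeff_spec γ hγΦ, ← hsub]
      simp only [add_smul, Finset.sum_add_distrib, ite_smul, one_smul, zero_smul]
      rw [Finset.sum_ite_eq' B.Δ β (fun δ => δ), Finset.sum_ite_eq' B.Δ (-α) (fun δ => δ),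
        if_pos hβ, if_pos hα]
      abel
    by_cases hcase : β = -α
    · -- case (i)
      left
      have hαβ : α = -β := by rw [hcase, neg_neg]
      have h1 := key β hβ
      rw [if_pos rfl, if_pos hcase] at h1
      have h1' : n * B.coeff γ β = 2 := by exact_mod_cast h1
      have hk0 : 0 ≤ B.coeff γ β := hγ.2 β hβ
      have hnpos : 0 < n := by nlinarith
      have hn0 : (n:ℝ) ≠ 0 := by
        have : (0:ℝ) < (n:ℝ) := by exact_mod_cast hnpos
        linarith
      have h2 : (2:ℝ) • β = (n:ℝ) • γ := by
        rw [hαβ] at hsub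
        rw [show (2:ℝ) • β = β - -β by module]
        exact hsub
      have hγβ : (2/(n:ℝ)) • β = γ := by
        rw [show (2/(n:ℝ)) = (n:ℝ)⁻¹ * 2 by ring, mul_smul, h2, smul_smul,
          inv_mul_cancel₀ hn0, one_smul]
      have hmem : (2/(n:ℝ)) • β ∈ R.Φ := by rw [hγβ]; exact hγΦ
      rcases R.reduced β hβΦ (2/(n:ℝ)) hmem with ht1 | ht1
      · have hneq : (n:ℝ) = 2 := by field_simp at ht1; linarith
        have hγeqβ : γ = β := by
          rw [← hγβ, hneq]; norm_num
        exact ⟨hαβ, hγeqβ, by rw [hcpair, hneq]⟩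
      · exfalso
        have hpos : 0 < 2/(n:ℝ) := by positivity
        rw [ht1] at hpos; linarith
    · -- case (ii)
      right
      have h1 := key β hβ
      rw [if_pos rfl, if_neg hcase] at h1
      have h1' : n * B.coeff γ β = 1 := by exact_mod_cast h1
      have hk0 : 0 ≤ B.coeff γ β := hγ.2 β hβ
      have hn1 : n = 1 := by
        rcases Int.isUnit_iff.mp (IsUnit.of_mul_eq_one _ h1') with hu | hu
        · exact hu
        · subst hu; omega
      have hγeq : γ = β + -α := by
        rw [hn1, Int.cast_one, one_smul] at hsub
        rw [← hsub]; abel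
      refine ⟨by rw [← hγeq]; exact hγΦ, hγeq, ?_⟩
      rw [hcpair, hn1]; norm_num
  · intro hrhs
    have hlevel : B.level h α = B.level h β + 1 := by
      rw [Base.level, Base.level, if_pos (isPos_of_simple B hβ),
        if_neg (not_isPos_of_neg_simple B hα hαΦ), htv_simple B hβ,
        htv_neg_simple B hα hαΦ]
      ring
    refine ⟨hβl, hαl, hγ, ?_, hlevel⟩
    rcases hrhs with ⟨h1, h2, h3⟩ | ⟨h1, h2, h3⟩
    · subst h2
      rw [h1, sref]
      exact (Submodule.reflection_orthogonalComplement_singleton_eq_neg γ).symm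
    · rw [sref_apply_formula, real_inner_comm β γ,
        show (2 * ⟪β, γ⟫ / ⟪γ, γ⟫) = cpair β γ from rfl, h3, one_smul, h2]
      module
end
end

section
/- Let α and β be long roots with α ≤ β in the order determined by Δ (i.e. β − α is a nonnegative integer combination of simple roots). If 0 < α ≤ β, or if α ≤ β < 0, then there is a simple path from β to α. -/
open scoped RealInnerProductSpace Classical

noncomputable section

variable {V : Type} [NormedAddCommGroup V] [InnerProductSpace ℝ V] [FiniteDimensional ℝ V]

section Aux

open Finset

variable {R : NRootSystem V}

lemma NRS.inner_pos {γ : V} (hγ : γ ∈ R.Φ) : 0 < ⟪γ, γ⟫ :=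
  lt_of_lt_of_le one_pos (R.norm_one_le γ hγ)

lemma NRS.ne_zero {γ : V} (hγ : γ ∈ R.Φ) : γ ≠ 0 :=
  fun h => R.zero_not_mem (h ▸ hγ)

lemma NRS.inner_le_r {γ : V} (hγ : γ ∈ R.Φ) : ⟪γ, γ⟫ ≤ R.r := by
  unfold NRootSystem.r
  exact Finset.le_sup' (fun α => ⟪α, α⟫) hγ

lemma NRS.r_pos (R : NRootSystem V) : 0 < R.r := by
  obtain ⟨γ, hγ⟩ := R.nonempty
  exact lt_of_lt_of_le (NRS.inner_pos hγ) (NRS.inner_le_r hγ)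

lemma sref_apply' (γ x : V) : sref γ x = x - (2 * ⟪x, γ⟫ / ⟪γ, γ⟫) • γ := by
  have hproj : ((Submodule.span ℝ {γ}).starProjection x : V)
      = (⟪γ, x⟫ / ((‖γ‖ : ℝ) ^ 2)) • γ := Submodule.starProjection_singleton ℝ x
  rw [sref, Submodule.reflection_apply, Submodule.starProjection_orthogonal_val, hproj,
    ← real_inner_self_eq_norm_sq, real_inner_comm γ x, two_smul ℕ,
    mul_div_assoc, two_mul, add_smul]
  abel

lemma sref_sref (γ x : V) : sref γ (sref γ x) = x := Submodule.reflection_reflection _ x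

lemma cpair_mul {x γ : V} (h : ⟪γ, γ⟫ ≠ 0) {c : ℝ} (hm : cpair x γ = c) :
    2 * ⟪x, γ⟫ = c * ⟪γ, γ⟫ := by
  have h2 : (2 * ⟪x, γ⟫ / ⟪γ, γ⟫ : ℝ) = c := hm
  rwa [div_eq_iff h] at h2

lemma NRS.sref_self {γ : V} (hγ : γ ∈ R.Φ) : sref γ γ = -γ := by
  rw [sref_apply', mul_div_assoc, div_self (ne_of_gt (NRS.inner_pos hγ)), mul_one, two_smul]
  abel

lemma NRS.neg_mem {γ : V} (hγ : γ ∈ R.Φ) : -γ ∈ R.Φ := by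
  have := R.reflect_mem γ hγ γ hγ
  rwa [NRS.sref_self hγ] at this

lemma NRS.cpair_int {γ x : V} (hγ : γ ∈ R.Φ) (hx : x ∈ R.Φ) :
    ∃ n : ℤ, cpair x γ = n := by
  obtain ⟨n, hn⟩ := R.pairing_int γ hγ x hx
  exact ⟨n, by rw [cpair, hn, mul_div_assoc, div_self (ne_of_gt (NRS.inner_pos hγ)), mul_one]⟩

variable (B : Base R)

lemma Base.coeff_unique {f g : V → ℝ}
    (hfg : ∑ t ∈ B.Δ, f t • t = ∑ t ∈ B.Δ, g t • t) : ∀ t ∈ B.Δ, f t = g t := by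
  intro t ht
  have key : ∑ a ∈ Finset.univ (α := {x : V // x ∈ B.Δ}), (f a.1 - g a.1) • (a.1 : V) = 0 := by
    rw [Finset.univ_eq_attach]
    have h1 : ∑ a ∈ B.Δ.attach, (f a.1 - g a.1) • (a.1 : V)
        = ∑ u ∈ B.Δ, (f u - g u) • u := Finset.sum_attach B.Δ (fun u => (f u - g u) • u)
    rw [h1]
    simp only [sub_smul, Finset.sum_sub_distrib, hfg, sub_self]
  have := linearIndependent_iff'.mp B.indep Finset.univ (fun a => f a.1 - g a.1) key
    ⟨t, ht⟩ (Finset.mem_univ _)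
  exact sub_eq_zero.mp this

lemma Base.eq_of_coeff_eq {γ δ : V} (hγ : γ ∈ R.Φ) (hδ : δ ∈ R.Φ)
    (h : ∀ t ∈ B.Δ, B.coeff γ t = B.coeff δ t) : γ = δ := by
  rw [B.coeff_spec γ hγ, B.coeff_spec δ hδ]
  exact Finset.sum_congr rfl fun t ht => by rw [h t ht]

lemma Base.coeff_neg {γ : V} (hγ : γ ∈ R.Φ) {t : V} (ht : t ∈ B.Δ) :
    B.coeff (-γ) t = - B.coeff γ t := by
  have h1 : ∑ u ∈ B.Δ, (B.coeff (-γ) u : ℝ) • u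
      = ∑ u ∈ B.Δ, ((-(B.coeff γ u) : ℤ) : ℝ) • u := by
    rw [← B.coeff_spec _ (NRS.neg_mem hγ)]
    have h2 : ∑ u ∈ B.Δ, ((-(B.coeff γ u) : ℤ) : ℝ) • u
        = - ∑ u ∈ B.Δ, (B.coeff γ u : ℝ) • u := by
      rw [← Finset.sum_neg_distrib]
      exact Finset.sum_congr rfl fun u _ => by push_cast; rw [neg_smul]
    rw [h2, ← B.coeff_spec γ hγ]
  have := B.coeff_unique h1 t ht
  exact_mod_cast this

lemma Base.simple_expand {s : V} (hs : s ∈ B.Δ) (c : ℝ) :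
    c • s = ∑ t ∈ B.Δ, (if t = s then c else 0) • t := by
  rw [Finset.sum_congr rfl (g := fun t => if t = s then c • t else 0)
    (fun t _ => by split_ifs with h <;> simp [h]),
    Finset.sum_ite_eq' B.Δ s (fun t => c • t), if_pos hs]

lemma Base.coeff_simple {s : V} (hs : s ∈ B.Δ) {t : V} (ht : t ∈ B.Δ) :
    B.coeff s t = if t = s then 1 else 0 := by
  have h1 : ∑ u ∈ B.Δ, (B.coeff s u : ℝ) • u
      = ∑ u ∈ B.Δ, (if u = s then (1 : ℝ) else 0) • u := by
    rw [← B.coeff_spec s (B.subset hs), ← B.simple_expand hs 1, one_smul]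
  have := B.coeff_unique h1 t ht
  split_ifs with hts
  · rw [if_pos hts] at this; exact_mod_cast this
  · rw [if_neg hts] at this; exact_mod_cast this

lemma Base.coeff_sref {β s : V} (hβ : β ∈ R.Φ) (hs : s ∈ B.Δ) {m : ℤ}
    (hm : cpair β s = m) {t : V} (ht : t ∈ B.Δ) :
    B.coeff (sref s β) t = B.coeff β t - (if t = s then m else 0) := by
  have hmem := R.reflect_mem s (B.subset hs) β hβ
  have h1 : sref s β = ∑ u ∈ B.Δ, ((B.coeff β u - if u = s then m else 0 : ℤ) : ℝ) • u := by
    rw [sref_apply']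
    rw [show (2 * ⟪β, s⟫ / ⟪s, s⟫ : ℝ) = (m : ℝ) from hm]
    nth_rewrite 1 [B.coeff_spec β hβ]
    rw [B.simple_expand hs (m : ℝ), ← Finset.sum_sub_distrib]
    refine Finset.sum_congr rfl fun u _ => ?_
    split_ifs with hus <;> push_cast <;> rw [sub_smul] <;> simp
  have h2 := B.coeff_spec _ hmem
  have := B.coeff_unique (h2.symm.trans h1) t ht
  exact_mod_cast this

lemma Base.ne_neg' {γ : V} (hγp : B.IsPos γ) {δ : V} (hδp : B.IsPos δ) : γ ≠ -δ := by
  intro h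
  obtain ⟨t, ht, htne⟩ : ∃ t ∈ B.Δ, B.coeff γ t ≠ 0 := by
    by_contra hall
    push_neg at hall
    apply R.zero_not_mem
    have hz : γ = 0 := by
      rw [B.coeff_spec γ hγp.1]
      exact Finset.sum_eq_zero fun t ht => by rw [hall t ht]; simp
    exact hz ▸ hγp.1
  have h1 : B.coeff γ t = - B.coeff δ t := h ▸ B.coeff_neg hδp.1 ht
  have h2 := hγp.2 t ht
  have h3 := hδp.2 t ht
  omega

lemma Base.not_isPos_neg {γ : V} (hγp : B.IsPos γ) : ¬ B.IsPos (-γ) :=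
  fun h => B.ne_neg' h hγp (by abel)

lemma Base.isPos_simple {s : V} (hs : s ∈ B.Δ) : B.IsPos s :=
  ⟨B.subset hs, fun t ht => by rw [B.coeff_simple hs ht]; split_ifs <;> omega⟩

lemma Base.coeff_pos_exists {γ : V} (hγ : B.IsPos γ) : ∃ t ∈ B.Δ, 1 ≤ B.coeff γ t := by
  by_contra hall
  push_neg at hall
  apply R.zero_not_mem
  have hz : γ = 0 := by
    rw [B.coeff_spec γ hγ.1]
    refine Finset.sum_eq_zero fun t ht => ?_
    have h1 := hγ.2 t ht
    have h2 := hall t ht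
    have h3 : B.coeff γ t = 0 := by omega
    rw [h3]; simp
  exact hz ▸ hγ.1

lemma Base.ht_pos {γ : V} (hγ : B.IsPos γ) : 1 ≤ B.ht γ := by
  obtain ⟨u, hu, hu1⟩ := B.coeff_pos_exists hγ
  unfold Base.ht
  exact le_trans hu1 (Finset.single_le_sum (fun v hv => hγ.2 v hv) hu)

lemma Base.isPos_sref {β s : V} (hβ : B.IsPos β) (hs : s ∈ B.Δ) (hne : β ≠ s) :
    B.IsPos (sref s β) := by
  have hβΦ := hβ.1
  have hmem := R.reflect_mem s (B.subset hs) β hβΦ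
  obtain ⟨m, hm⟩ := NRS.cpair_int (B.subset hs) hβΦ
  obtain ⟨t, ht, htpos, htne⟩ : ∃ t ∈ B.Δ, 1 ≤ B.coeff β t ∧ t ≠ s := by
    by_contra hall
    push_neg at hall
    have hrep : β = (B.coeff β s : ℝ) • s := by
      have hexp : (B.coeff β s : ℝ) • s = ∑ u ∈ B.Δ, (B.coeff β u : ℝ) • u := by
        rw [B.simple_expand hs (B.coeff β s : ℝ)]
        refine Finset.sum_congr rfl fun u hu => ?_
        split_ifs with h
        · rw [h]
        · have h1 := hβ.2 u hu
          have h2 := hall u hu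
          have h3 : B.coeff β u = 0 := by
            by_contra hc
            exact absurd (h2 (by omega)) h
          rw [h3]; simp
      rw [hexp, ← B.coeff_spec β hβΦ]
    rcases R.reduced s (B.subset hs) (B.coeff β s : ℝ) (by rw [← hrep]; exact hβΦ) with h1 | h1
    · exact hne (by rw [hrep, h1, one_smul])
    · have h2 : B.coeff β s = -1 := by exact_mod_cast h1
      have h3 := hβ.2 s hs
      omega
  refine ⟨hmem, ?_⟩
  rcases B.coeff_sign _ hmem with hsign | hsign
  · exact hsign
  · exfalso
    have h1 := B.coeff_sref hβΦ hs hm ht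
    rw [if_neg htne] at h1
    have h2 := hsign t ht
    omega

lemma Base.ht_sref {β s : V} (hβ : β ∈ R.Φ) (hs : s ∈ B.Δ) {m : ℤ}
    (hm : cpair β s = m) : B.ht (sref s β) = B.ht β - m := by
  unfold Base.ht
  rw [Finset.sum_congr rfl (fun t ht => B.coeff_sref hβ hs hm ht),
    Finset.sum_sub_distrib, Finset.sum_ite_eq' B.Δ s (fun _ => m), if_pos hs]

lemma Base.htv_sref {β s : V} (hβ : β ∈ R.Φ) (hs : s ∈ B.Δ) {m : ℤ}
    (hm : cpair β s = m) : B.htv (sref s β) = B.htv β - cpair s β := by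
  have hss := NRS.inner_pos (B.subset hs)
  have hββ := NRS.inner_pos hβ
  have h2 : (2 : ℝ) * ⟪β, s⟫ = m * ⟪s, s⟫ := cpair_mul (ne_of_gt hss) hm
  have hcsb : cpair s β = (m : ℝ) * ⟪s, s⟫ / ⟪β, β⟫ := by
    show 2 * ⟪s, β⟫ / ⟪β, β⟫ = _
    rw [real_inner_comm β s, h2]
  unfold Base.htv
  rw [LinearIsometryEquiv.inner_map_map]
  rw [Finset.sum_congr rfl (g := fun t =>
      (B.coeff β t : ℝ) * ⟪t, t⟫ / ⟪β, β⟫ - (if t = s then (m : ℝ) * ⟪s, s⟫ / ⟪β, β⟫ else 0))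
    (fun t ht => by
      rw [B.coeff_sref hβ hs hm ht]
      push_cast
      split_ifs with hts
      · rw [hts]; ring
      · ring)]
  rw [Finset.sum_sub_distrib, Finset.sum_ite_eq' B.Δ s
    (fun _ => (m : ℝ) * ⟪s, s⟫ / ⟪β, β⟫), if_pos hs, hcsb]

lemma Base.htv_neg {γ : V} (hγ : γ ∈ R.Φ) : B.htv (-γ) = - B.htv γ := by
  unfold Base.htv
  rw [← Finset.sum_neg_distrib]
  refine Finset.sum_congr rfl fun t ht => ?_
  rw [B.coeff_neg hγ ht, inner_neg_neg]
  push_cast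
  ring

lemma Base.isPosNeg {γ : V} (hγ : γ ∈ R.Φ) : B.IsPos γ ∨ B.IsNeg γ := by
  rcases B.coeff_sign γ hγ with h | h
  · exact Or.inl ⟨hγ, h⟩
  · exact Or.inr ⟨hγ, h⟩

lemma Base.exists_inner_pos {γ : V} (hγ : B.IsPos γ) : ∃ s ∈ B.Δ, 0 < ⟪γ, s⟫ := by
  have hγΦ := hγ.1
  have hpos : (0 : ℝ) < ⟪γ, γ⟫ := NRS.inner_pos hγΦ
  have hexp : ⟪γ, γ⟫ = ∑ t ∈ B.Δ, (B.coeff γ t : ℝ) * ⟪t, γ⟫ := by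
    nth_rewrite 1 [B.coeff_spec γ hγΦ]
    rw [sum_inner]
    exact Finset.sum_congr rfl fun t ht => real_inner_smul_left t γ _
  by_contra hall
  push_neg at hall
  have hle0 : ⟪γ, γ⟫ ≤ 0 := by
    rw [hexp]
    refine Finset.sum_nonpos fun t ht => ?_
    have h1 : (0 : ℝ) ≤ (B.coeff γ t : ℝ) := by exact_mod_cast hγ.2 t ht
    have h2 : ⟪t, γ⟫ ≤ 0 := by rw [real_inner_comm]; exact hall t ht
    exact mul_nonpos_of_nonneg_of_nonpos h1 h2
  linarith

/-- integrality of coroot coefficients, positive case with fuel -/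
lemma Base.coroot_int_aux : ∀ N : ℕ, ∀ γ : V, B.IsPos γ → B.ht γ ≤ N →
    ∀ t ∈ B.Δ, ∃ n : ℤ, (B.coeff γ t : ℝ) * ⟪t, t⟫ = n * ⟪γ, γ⟫ := by
  intro N
  induction N with
  | zero =>
    intro γ hγ hht t ht
    exfalso
    have := B.ht_pos hγ
    omega
  | succ N ih =>
    intro γ hγ hht t ht
    by_cases hγΔ : γ ∈ B.Δ
    · by_cases hts : t = γ
      · refine ⟨1, ?_⟩
        rw [B.coeff_simple hγΔ ht, if_pos hts, hts]
        try push_cast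
        try ring
      · refine ⟨0, ?_⟩
        rw [B.coeff_simple hγΔ ht, if_neg hts]
        try push_cast
        try ring
    · obtain ⟨s, hs, hsγ⟩ := B.exists_inner_pos hγ
      have hγΦ := hγ.1
      have hsΦ := B.subset hs
      obtain ⟨m, hm⟩ := NRS.cpair_int hsΦ hγΦ
      have hss := NRS.inner_pos hsΦ
      have hm2 : (2 : ℝ) * ⟪γ, s⟫ = m * ⟪s, s⟫ := cpair_mul (ne_of_gt hss) hm
      have hmpos : 1 ≤ m := by
        by_contra hc
        push_neg at hc
        have hm0 : (m : ℝ) ≤ 0 := by exact_mod_cast (by omega : m ≤ (0 : ℤ))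
        nlinarith
      have hγs : γ ≠ s := fun h => hγΔ (h ▸ hs)
      have hpos' : B.IsPos (sref s γ) := B.isPos_sref hγ hs hγs
      have hht' : B.ht (sref s γ) ≤ N := by
        have := B.ht_sref hγΦ hs hm
        omega
      have hinner : ⟪sref s γ, sref s γ⟫ = ⟪γ, γ⟫ := LinearIsometryEquiv.inner_map_map _ _ _
      obtain ⟨k, hk⟩ := R.pairing_int γ hγΦ s hsΦ
      have hks : (2 : ℝ) * ⟪γ, s⟫ = k * ⟪γ, γ⟫ := by
        rw [real_inner_comm s γ]; exact hk
      obtain ⟨n', hn'⟩ := ih (sref s γ) hpos' hht' t ht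
      rw [hinner] at hn'
      have hcoe := B.coeff_sref hγΦ hs hm ht
      by_cases hts : t = s
      · refine ⟨n' + k, ?_⟩
        rw [if_pos hts] at hcoe
        have hci : B.coeff γ t = B.coeff (sref s γ) t + m := by omega
        have hc : (B.coeff γ t : ℝ) = (B.coeff (sref s γ) t : ℝ) + (m : ℝ) := by
          exact_mod_cast hci
        rw [hc, add_mul, hn', hts]
        push_cast
        linear_combination hks - hm2
      · refine ⟨n', ?_⟩
        rw [if_neg hts] at hcoe
        have hci : B.coeff γ t = B.coeff (sref s γ) t := by omega
        have hc : (B.coeff γ t : ℝ) = (B.coeff (sref s γ) t : ℝ) := by exact_mod_cast hci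
        rw [hc, hn']

lemma Base.coroot_int {γ : V} (hγ : γ ∈ R.Φ) {t : V} (ht : t ∈ B.Δ) :
    ∃ n : ℤ, (B.coeff γ t : ℝ) * ⟪t, t⟫ = n * ⟪γ, γ⟫ := by
  rcases B.isPosNeg hγ with hp | hn
  · exact B.coroot_int_aux (B.ht γ).toNat γ hp (by omega) t ht
  · have hp : B.IsPos (-γ) := ⟨NRS.neg_mem hγ, fun u hu => by
      rw [B.coeff_neg hγ hu]
      have := hn.2 u hu
      omega⟩
    obtain ⟨n, hn'⟩ := B.coroot_int_aux (B.ht (-γ)).toNat (-γ) hp (by omega) t ht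
    refine ⟨-n, ?_⟩
    rw [B.coeff_neg hγ ht, inner_neg_neg] at hn'
    push_cast at hn' ⊢
    linarith

/-- For a long root `β` and a non-proportional root `s`, `⟨s, β∨⟩ ∈ {-1, 0, 1}`. -/
lemma Base.cpair_small {β s : V} (hβΦ : β ∈ R.Φ) (hβl : ⟪β, β⟫ = R.r) (hsΦ : s ∈ R.Φ)
    (h1 : s ≠ β) (h2 : s ≠ -β) : ∃ n : ℤ, cpair s β = n ∧ n ^ 2 ≤ 1 := by
  obtain ⟨na, hna⟩ := NRS.cpair_int hβΦ hsΦ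
  obtain ⟨nb, hnb⟩ := NRS.cpair_int hsΦ hβΦ
  have hββ := NRS.inner_pos hβΦ
  have hss := NRS.inner_pos hsΦ
  have hsr := NRS.inner_le_r hsΦ
  have hβ0 := NRS.ne_zero hβΦ
  have hs0 := NRS.ne_zero hsΦ
  have hna2 : (2 : ℝ) * ⟪s, β⟫ = na * ⟪β, β⟫ := cpair_mul (ne_of_gt hββ) hna
  have hnb2 : (2 : ℝ) * ⟪β, s⟫ = nb * ⟪s, s⟫ := cpair_mul (ne_of_gt hss) hnb
  have hnormβ : 0 < ‖β‖ := norm_pos_iff.mpr hβ0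
  have hnp : ∀ c : ℝ, s ≠ c • β := by
    intro c hc
    have hcΦ : c • β ∈ R.Φ := by rw [← hc]; exact hsΦ
    rcases R.reduced β hβΦ c hcΦ with h | h
    · exact h1 (by rw [hc, h, one_smul])
    · exact h2 (by rw [hc, h, neg_smul, one_smul])
  have hCS : ⟪s, β⟫ ^ 2 < ⟪s, s⟫ * ⟪β, β⟫ := by
    have hub : ⟪s, β⟫ < ‖s‖ * ‖β‖ := by
      rw [inner_lt_norm_mul_iff_real]
      intro hcon
      refine hnp (‖β‖⁻¹ * ‖s‖) ?_
      rw [mul_smul, ← hcon, inv_smul_smul₀ (ne_of_gt hnormβ)]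
    have hlb : ⟪s, -β⟫ < ‖s‖ * ‖-β‖ := by
      rw [inner_lt_norm_mul_iff_real]
      intro hcon
      rw [norm_neg] at hcon
      refine hnp (‖β‖⁻¹ * (-‖s‖)) ?_
      rw [mul_smul, neg_smul, ← smul_neg, ← hcon, inv_smul_smul₀ (ne_of_gt hnormβ)]
    rw [norm_neg, inner_neg_right] at hlb
    have hsq := sq_lt_sq' (by linarith) hub
    rw [mul_pow, ← real_inner_self_eq_norm_sq, ← real_inner_self_eq_norm_sq] at hsq
    linarith [hsq]
  have hprod : (na : ℝ) * nb < 4 := by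
    have hmul : (2 * ⟪s, β⟫) * (2 * ⟪β, s⟫) = (na * ⟪β, β⟫) * (nb * ⟪s, s⟫) := by
      rw [hna2, hnb2]
    rw [real_inner_comm s β] at hmul
    have h4 : ((na : ℝ) * nb) * (⟪β, β⟫ * ⟪s, s⟫) < 4 * (⟪β, β⟫ * ⟪s, s⟫) := by
      nlinarith [hCS, hmul]
    exact (mul_lt_mul_iff_left₀ (mul_pos hββ hss)).mp h4
  have key : (na : ℝ) * ⟪β, β⟫ = nb * ⟪s, s⟫ := by
    rw [← hna2, ← hnb2, real_inner_comm]
  have hssββ : ⟪s, s⟫ ≤ ⟪β, β⟫ := by rw [hβl]; exact hsr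
  have hsq : (na : ℝ) ^ 2 ≤ (na : ℝ) * nb := by
    have h1 : (na : ℝ) ^ 2 * ⟪s, s⟫ ≤ (na : ℝ) ^ 2 * ⟪β, β⟫ :=
      mul_le_mul_of_nonneg_left hssββ (sq_nonneg _)
    have h2 : (na : ℝ) ^ 2 * ⟪β, β⟫ = ((na : ℝ) * nb) * ⟪s, s⟫ := by
      linear_combination (na : ℝ) * key
    have h3 : (na : ℝ) ^ 2 * ⟪s, s⟫ ≤ ((na : ℝ) * nb) * ⟪s, s⟫ := by linarith
    exact le_of_mul_le_mul_right h3 hss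
  have hint : na ^ 2 ≤ 3 := by
    have h4 : (na : ℝ) ^ 2 < 4 := lt_of_le_of_lt hsq hprod
    have h6 : na ^ 2 < 4 := by exact_mod_cast h4
    omega
  refine ⟨na, hna, ?_⟩
  have hle1 : na ≤ 1 := by nlinarith [hint]
  have hge1 : -1 ≤ na := by nlinarith [hint]
  nlinarith [mul_nonneg (by linarith : (0:ℤ) ≤ 1 - na) (by linarith : (0:ℤ) ≤ 1 + na)]

end Aux

section PathAux

open Finset

variable {R : NRootSystem V} (B : Base R)

lemma Base.level_pos' {h γ : V} (hγ : B.IsPos γ) : B.level h γ = B.htv h - B.htv γ := by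
  unfold Base.level
  exact if_pos hγ

lemma Base.level_neg' {h γ : V} (hγ : ¬ B.IsPos γ) : B.level h γ = B.htv h - B.htv γ - 1 := by
  unfold Base.level
  exact if_neg hγ

lemma Base.step_neg {h s x y : V} (hst : B.Step h s x y) (hx : B.IsPos x) (hy : B.IsPos y) :
    B.Step h s (-y) (-x) := by
  unfold Base.Step at hst ⊢
  obtain ⟨hxl, hyl, hsp, href, hlev⟩ := hst
  refine ⟨⟨NRS.neg_mem hyl.1, by rw [inner_neg_neg]; exact hyl.2⟩,
    ⟨NRS.neg_mem hxl.1, by rw [inner_neg_neg]; exact hxl.2⟩, hsp, ?_, ?_⟩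
  · rw [map_neg, href, sref_sref]
  · rw [B.level_neg' (B.not_isPos_neg hx), B.level_neg' (B.not_isPos_neg hy),
      B.htv_neg hxl.1, B.htv_neg hyl.1]
    rw [B.level_pos' hy, B.level_pos' hx] at hlev
    linarith [hlev]

lemma Base.chain_cons {h s β β' α : V} {n : ℕ} {g : Fin n → V} {c : Fin (n + 1) → V}
    (hstep : B.Step h s β β') (hsΔ : s ∈ B.Δ) (hβpos : B.IsPos β)
    (hc0 : c 0 = β') (hcl : c (Fin.last n) = α)
    (hsteps : ∀ i : Fin n, B.Step h (g i) (c i.castSucc) (c i.succ))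
    (hgΔ : ∀ i, g i ∈ B.Δ) (hcpos : ∀ j, B.IsPos (c j)) :
    ∃ (m : ℕ) (g' : Fin m → V) (c' : Fin (m + 1) → V), c' 0 = β ∧ c' (Fin.last m) = α ∧
      (∀ i : Fin m, B.Step h (g' i) (c' i.castSucc) (c' i.succ)) ∧
      (∀ i, g' i ∈ B.Δ) ∧ (∀ j, B.IsPos (c' j)) := by
  refine ⟨n + 1, Fin.cons s g, Fin.cons β c, Fin.cons_zero _ _, ?_, ?_, ?_, ?_⟩
  · rw [← Fin.succ_last, Fin.cons_succ, hcl]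
  · intro i
    refine Fin.cases ?_ ?_ i
    · simpa [hc0] using hstep
    · intro j
      simpa [Fin.cons_succ, ← Fin.succ_castSucc] using hsteps j
  · intro i
    refine Fin.cases ?_ ?_ i
    · simpa using hsΔ
    · intro j; simpa using hgΔ j
  · intro j
    refine Fin.cases ?_ ?_ j
    · simpa using hβpos
    · intro j'; simpa using hcpos j'

lemma Base.chain_snoc {h s β α' α : V} {n : ℕ} {g : Fin n → V} {c : Fin (n + 1) → V}
    (hstep : B.Step h s α' α) (hsΔ : s ∈ B.Δ) (hαpos : B.IsPos α)
    (hc0 : c 0 = β) (hcl : c (Fin.last n) = α')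
    (hsteps : ∀ i : Fin n, B.Step h (g i) (c i.castSucc) (c i.succ))
    (hgΔ : ∀ i, g i ∈ B.Δ) (hcpos : ∀ j, B.IsPos (c j)) :
    ∃ (m : ℕ) (g' : Fin m → V) (c' : Fin (m + 1) → V), c' 0 = β ∧ c' (Fin.last m) = α ∧
      (∀ i : Fin m, B.Step h (g' i) (c' i.castSucc) (c' i.succ)) ∧
      (∀ i, g' i ∈ B.Δ) ∧ (∀ j, B.IsPos (c' j)) := by
  refine ⟨n + 1, Fin.snoc g s, Fin.snoc c α, ?_, ?_, ?_, ?_, ?_⟩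
  · rw [show (0 : Fin (n + 2)) = Fin.castSucc 0 from (Fin.castSucc_zero).symm,
      Fin.snoc_castSucc, hc0]
  · rw [Fin.snoc_last]
  · intro i
    refine Fin.lastCases ?_ ?_ i
    · simpa [Fin.succ_last, hcl] using hstep
    · intro j
      simpa [Fin.succ_castSucc, -Fin.castSucc_succ] using hsteps j
  · intro i
    refine Fin.lastCases ?_ ?_ i
    · simpa using hsΔ
    · intro j; simpa using hgΔ j
  · intro j
    refine Fin.lastCases ?_ ?_ j
    · simpa using hαpos
    · intro j'; simpa using hcpos j'

lemma Base.simplePath_aux (h : V) : ∀ N : ℕ, ∀ α β : V, R.IsLong α → R.IsLong β →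
    B.IsPos α → B.IsPos β → (∀ s ∈ B.Δ, B.coeff α s ≤ B.coeff β s) →
    B.ht β ≤ B.ht α + N →
    ∃ (n : ℕ) (g : Fin n → V) (c : Fin (n + 1) → V), c 0 = β ∧ c (Fin.last n) = α ∧
      (∀ i : Fin n, B.Step h (g i) (c i.castSucc) (c i.succ)) ∧
      (∀ i, g i ∈ B.Δ) ∧ (∀ j, B.IsPos (c j)) := by
  intro N
  induction N with
  | zero =>
    intro α β hαl hβl hαp hβp hle hfuel
    have heq : ∀ t ∈ B.Δ, B.coeff β t = B.coeff α t := by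
      by_contra hc
      push_neg at hc
      obtain ⟨t₀, ht₀, hne⟩ := hc
      have hlt : B.ht α < B.ht β := by
        unfold Base.ht
        exact Finset.sum_lt_sum hle
          ⟨t₀, ht₀, lt_of_le_of_ne (hle t₀ ht₀) (fun hh => hne hh.symm)⟩
      omega
    have hba : β = α := B.eq_of_coeff_eq hβl.1 hαl.1 heq
    subst hba
    exact ⟨0, Fin.elim0, fun _ => β, rfl, rfl, fun i => i.elim0, fun i => i.elim0, fun _ => hβp⟩
  | succ N ih =>
    intro α β hαl hβl hαp hβp hle hfuel
    by_cases heq : ∀ t ∈ B.Δ, B.coeff β t = B.coeff α t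
    · have hba : β = α := B.eq_of_coeff_eq hβl.1 hαl.1 heq
      subst hba
      exact ⟨0, Fin.elim0, fun _ => β, rfl, rfl, fun i => i.elim0, fun i => i.elim0, fun _ => hβp⟩
    · push_neg at heq
      have hαΦ := hαl.1
      have hβΦ := hβl.1
      have hrα : ⟪α, α⟫ = R.r := hαl.2
      have hrβ : ⟪β, β⟫ = R.r := hβl.2
      have hβα : β ≠ α := by
        obtain ⟨t₀, ht₀, hne⟩ := heq
        exact fun hcon => hne (by rw [hcon])
      have hdiff : β - α = ∑ t ∈ B.Δ, ((B.coeff β t - B.coeff α t : ℤ) : ℝ) • t :=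
        calc β - α = (∑ t ∈ B.Δ, (B.coeff β t : ℝ) • t) - ∑ t ∈ B.Δ, (B.coeff α t : ℝ) • t := by
              rw [← B.coeff_spec β hβΦ, ← B.coeff_spec α hαΦ]
        _ = _ := by
              rw [← Finset.sum_sub_distrib]
              exact Finset.sum_congr rfl fun t _ => by push_cast; rw [sub_smul]
      have hdd : 0 < ⟪β - α, β - α⟫ := by
        have h0 : β - α ≠ 0 := sub_ne_zero.mpr hβα
        have h1 : ⟪β - α, β - α⟫ ≠ 0 := fun hc => h0 (inner_self_eq_zero.mp hc)
        exact lt_of_le_of_ne real_inner_self_nonneg (Ne.symm h1)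
      obtain ⟨s, hs, hds, hsδ⟩ : ∃ s ∈ B.Δ, B.coeff α s < B.coeff β s ∧ 0 < ⟪s, β - α⟫ := by
        by_contra hall
        push_neg at hall
        have hexp : ⟪β - α, β - α⟫
            = ∑ t ∈ B.Δ, ((B.coeff β t - B.coeff α t : ℤ) : ℝ) * ⟪t, β - α⟫ := by
          nth_rewrite 1 [hdiff]
          rw [sum_inner]
          exact Finset.sum_congr rfl fun t _ => real_inner_smul_left _ _ _
        have hle0 : ⟪β - α, β - α⟫ ≤ 0 := by
          rw [hexp]
          refine Finset.sum_nonpos fun t htΔ => ?_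
          rcases lt_or_eq_of_le (hle t htΔ) with hlt | heqc
          · refine mul_nonpos_of_nonneg_of_nonpos ?_ (hall t htΔ hlt)
            have : (0 : ℤ) ≤ B.coeff β t - B.coeff α t := by omega
            exact_mod_cast this
          · have hz : B.coeff β t - B.coeff α t = 0 := by omega
            rw [hz]
            simp
        linarith
      have hss := NRS.inner_pos (B.subset hs)
      have hsβα : ⟪s, α⟫ < ⟪s, β⟫ := by
        have hsub : ⟪s, β - α⟫ = ⟪s, β⟫ - ⟪s, α⟫ := inner_sub_right s β α
        linarith
      obtain ⟨kβ, hkβ⟩ := B.coroot_int hβΦ hs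
      obtain ⟨kα, hkα⟩ := B.coroot_int hαΦ hs
      rw [hrβ] at hkβ
      rw [hrα] at hkα
      have hgap : R.r ≤ ((B.coeff β s - B.coeff α s : ℤ) : ℝ) * ⟪s, s⟫ := by
        have h1 : ((B.coeff β s - B.coeff α s : ℤ) : ℝ) * ⟪s, s⟫ = ((kβ - kα : ℤ) : ℝ) * R.r := by
          push_cast
          push_cast at hkβ hkα
          linear_combination hkβ - hkα
        have h2 : 0 < ((B.coeff β s - B.coeff α s : ℤ) : ℝ) * ⟪s, s⟫ := by
          have hd0 : (0 : ℝ) < ((B.coeff β s - B.coeff α s : ℤ) : ℝ) := by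
            exact_mod_cast (by omega : (0 : ℤ) < B.coeff β s - B.coeff α s)
          exact mul_pos hd0 hss
        have h3 : (1 : ℤ) ≤ kβ - kα := by
          by_contra hcon
          push_neg at hcon
          have hle0 : ((kβ - kα : ℤ) : ℝ) ≤ 0 := by
            exact_mod_cast (by omega : (kβ - kα : ℤ) ≤ 0)
          nlinarith [NRS.r_pos R]
        have h4 : (1 : ℝ) ≤ ((kβ - kα : ℤ) : ℝ) := by exact_mod_cast h3
        nlinarith [NRS.r_pos R]
      by_cases hcase : 0 < ⟪β, s⟫
      · -- Case A : reflect β down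
        have hβs : β ≠ s := by
          intro hcon
          apply R.zero_not_mem
          have hα0 : α = 0 := by
            rw [B.coeff_spec α hαΦ]
            refine Finset.sum_eq_zero fun t htΔ => ?_
            have h1 := hαp.2 t htΔ
            have h2 := hle t htΔ
            have h3 : B.coeff β t = if t = s then 1 else 0 := by
              rw [hcon]; exact B.coeff_simple hs htΔ
            have h5 : B.coeff β s = 1 := by
              rw [hcon, B.coeff_simple hs hs, if_pos rfl]
            rw [h3] at h2
            have h6 : B.coeff α t = 0 := by
              by_cases hts : t = s
              · rw [if_pos hts] at h2; rw [hts] at h1 ⊢; rw [h5] at hds; omega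
              · rw [if_neg hts] at h2; omega
            rw [h6]; simp
          exact hα0 ▸ hαΦ
        have hone : cpair s β = 1 := by
          have hsneβ : s ≠ β := fun hcon => hβs hcon.symm
          have hsnegβ : s ≠ -β := by
            intro hcon
            rw [hcon, inner_neg_right] at hcase
            have := NRS.inner_pos hβΦ
            linarith
          obtain ⟨n, hn, hn2⟩ := Base.cpair_small hβΦ hrβ (B.subset hs) hsneβ hsnegβ
          have hpos : 0 < cpair s β := by
            show 0 < 2 * ⟪s, β⟫ / ⟪β, β⟫
            apply div_pos
            · rw [real_inner_comm s β] at hcase; linarith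
            · exact NRS.inner_pos hβΦ
          have hn0 : (0 : ℝ) < (n : ℝ) := hn ▸ hpos
          have hn1 : (1 : ℤ) ≤ n := by exact_mod_cast (by exact_mod_cast hn0 : (0 : ℤ) < n)
          have hn1' : n = 1 := by nlinarith [hn2]
          rw [hn, hn1']
          norm_num
        obtain ⟨m, hm⟩ := NRS.cpair_int (B.subset hs) hβΦ
        have hm2 : (2 : ℝ) * ⟪β, s⟫ = m * ⟪s, s⟫ := cpair_mul (ne_of_gt hss) hm
        have hone2 : (2 : ℝ) * ⟪s, β⟫ = ⟪β, β⟫ := by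
          have := cpair_mul (ne_of_gt (NRS.inner_pos hβΦ)) hone
          linarith
        have hmr : (m : ℝ) * ⟪s, s⟫ = R.r := by
          rw [← hrβ, ← hone2, real_inner_comm β s]
          linarith [hm2]
        have hmle : m ≤ B.coeff β s - B.coeff α s := by
          have hc1 : (m : ℝ) * ⟪s, s⟫ ≤ ((B.coeff β s - B.coeff α s : ℤ) : ℝ) * ⟪s, s⟫ := by
            rw [hmr]; exact hgap
          have hc2 : (m : ℝ) ≤ ((B.coeff β s - B.coeff α s : ℤ) : ℝ) :=
            le_of_mul_le_mul_right hc1 hss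
          exact_mod_cast hc2
        have hm1 : 1 ≤ m := by
          by_contra hcon
          push_neg at hcon
          have hm0 : (m : ℝ) ≤ 0 := by exact_mod_cast (by omega : m ≤ (0 : ℤ))
          nlinarith [NRS.r_pos R, hmr, hss]
        have hβ'Φ : sref s β ∈ R.Φ := R.reflect_mem s (B.subset hs) β hβΦ
        have hβ'l : R.IsLong (sref s β) :=
          ⟨hβ'Φ, by rw [LinearIsometryEquiv.inner_map_map]; exact hrβ⟩
        have hβ'p : B.IsPos (sref s β) := B.isPos_sref hβp hs hβs
        have hle' : ∀ t ∈ B.Δ, B.coeff α t ≤ B.coeff (sref s β) t := by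
          intro t htΔ
          rw [B.coeff_sref hβΦ hs hm htΔ]
          by_cases hts : t = s
          · rw [if_pos hts, hts]; omega
          · rw [if_neg hts]; have := hle t htΔ; omega
        have hstep : B.Step h s β (sref s β) := by
          unfold Base.Step
          refine ⟨hβl, hβ'l, B.isPos_simple hs, rfl, ?_⟩
          rw [B.level_pos' hβ'p, B.level_pos' hβp, B.htv_sref hβΦ hs hm, hone]
          ring
        have hfuel' : B.ht (sref s β) ≤ B.ht α + N := by
          have := B.ht_sref hβΦ hs hm
          omega
        obtain ⟨n, g, c, hc0, hcl, hsteps, hgΔ, hcpos⟩ :=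
          ih α (sref s β) hαl hβ'l hαp hβ'p hle' hfuel'
        exact B.chain_cons hstep hs hβp hc0 hcl hsteps hgΔ hcpos
      · -- Case B : reflect α up
        push_neg at hcase
        have hαs : ⟪α, s⟫ < 0 := by
          rw [real_inner_comm α s, real_inner_comm β s] at hsβα
          linarith
        have hαnes : α ≠ s := by
          intro hcon
          rw [hcon] at hαs
          linarith
        have hsneα : s ≠ α := fun hcon => hαnes hcon.symm
        have hsnegα : s ≠ -α := B.ne_neg' (B.isPos_simple hs) hαp
        have hmone : cpair s α = -1 := by
          obtain ⟨n, hn, hn2⟩ := Base.cpair_small hαΦ hrα (B.subset hs) hsneα hsnegα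
          have hneg : cpair s α < 0 := by
            show 2 * ⟪s, α⟫ / ⟪α, α⟫ < 0
            apply div_neg_of_neg_of_pos
            · rw [real_inner_comm s α] at hαs; linarith
            · exact NRS.inner_pos hαΦ
          have hn0 : (n : ℝ) < 0 := hn ▸ hneg
          have hn1 : n ≤ (-1 : ℤ) := by
            have : n < (0 : ℤ) := by exact_mod_cast hn0
            omega
          have hn1' : n = -1 := by nlinarith [hn2]
          rw [hn, hn1']
          norm_num
        obtain ⟨m, hm⟩ := NRS.cpair_int (B.subset hs) hαΦ
        have hm2 : (2 : ℝ) * ⟪α, s⟫ = m * ⟪s, s⟫ := cpair_mul (ne_of_gt hss) hm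
        have hmone2 : (2 : ℝ) * ⟪s, α⟫ = -⟪α, α⟫ := by
          have := cpair_mul (ne_of_gt (NRS.inner_pos hαΦ)) hmone
          linarith
        have hmr : ((-m : ℤ) : ℝ) * ⟪s, s⟫ = R.r := by
          push_cast
          rw [← hrα]
          rw [real_inner_comm α s] at hmone2
          linarith [hm2]
        have hmle : -m ≤ B.coeff β s - B.coeff α s := by
          have hc1 : ((-m : ℤ) : ℝ) * ⟪s, s⟫ ≤ ((B.coeff β s - B.coeff α s : ℤ) : ℝ) * ⟪s, s⟫ := by
            rw [hmr]; exact hgap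
          have hc2 : ((-m : ℤ) : ℝ) ≤ ((B.coeff β s - B.coeff α s : ℤ) : ℝ) :=
            le_of_mul_le_mul_right hc1 hss
          exact_mod_cast hc2
        have hm1 : m ≤ -1 := by
          by_contra hcon
          push_neg at hcon
          have hm0 : (0 : ℝ) ≤ (m : ℝ) := by exact_mod_cast (by omega : (0 : ℤ) ≤ m)
          have := NRS.r_pos R
          nlinarith [hmr, hss]
        have hα'Φ : sref s α ∈ R.Φ := R.reflect_mem s (B.subset hs) α hαΦ
        have hα'l : R.IsLong (sref s α) :=
          ⟨hα'Φ, by rw [LinearIsometryEquiv.inner_map_map]; exact hrα⟩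
        have hα'p : B.IsPos (sref s α) := B.isPos_sref hαp hs hαnes
        have hle' : ∀ t ∈ B.Δ, B.coeff (sref s α) t ≤ B.coeff β t := by
          intro t htΔ
          rw [B.coeff_sref hαΦ hs hm htΔ]
          by_cases hts : t = s
          · rw [if_pos hts, hts]; omega
          · rw [if_neg hts]; have := hle t htΔ; omega
        have hstep : B.Step h s (sref s α) α := by
          unfold Base.Step
          refine ⟨hα'l, hαl, B.isPos_simple hs, (sref_sref s α).symm, ?_⟩
          rw [B.level_pos' hα'p, B.level_pos' hαp, B.htv_sref hαΦ hs hm, hmone]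
          ring
        have hfuel' : B.ht β ≤ B.ht (sref s α) + N := by
          have := B.ht_sref hαΦ hs hm
          omega
        obtain ⟨n, g, c, hc0, hcl, hsteps, hgΔ, hcpos⟩ :=
          ih (sref s α) β hα'l hβl hα'p hβp hle' hfuel'
        exact B.chain_snoc hstep hs hαp hc0 hcl hsteps hgΔ hcpos

end PathAux

/-- let `α` and `β` be long roots with `α ≤ β` in the order determined
by `Δ`. If `0 < α ≤ β`, or if `α ≤ β < 0`, then there is a simple path from `β`
to `α`. -/
theorem simplePath_of_le (R : NRootSystem V) (B : Base R) {h : V}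
    (hh : B.IsHighest h) {α β : V} (hα : R.IsLong α) (hβ : R.IsLong β)
    (hle : ∀ s ∈ B.Δ, B.coeff α s ≤ B.coeff β s)
    (hcase : B.IsPos α ∨ B.IsNeg β) :
    B.HasSimplePath h β α := by
  rcases hcase with hpos | hneg
  · have hβp : B.IsPos β := ⟨hβ.1, fun t ht => le_trans (hpos.2 t ht) (hle t ht)⟩
    obtain ⟨n, g, c, hc0, hcl, hsteps, hgΔ, hcpos⟩ :=
      B.simplePath_aux h (B.ht β - B.ht α).toNat α β hα hβ hpos hβp hle (by omega)
    exact ⟨n, g, ⟨⟨c, hc0, hcl, hsteps⟩, hgΔ⟩⟩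
  · have hαn : B.IsNeg α := ⟨hα.1, fun t ht => le_trans (hle t ht) (hneg.2 t ht)⟩
    have hnαp : B.IsPos (-α) := ⟨NRS.neg_mem hα.1, fun t ht => by
      rw [B.coeff_neg hα.1 ht]
      have := hαn.2 t ht
      omega⟩
    have hnβp : B.IsPos (-β) := ⟨NRS.neg_mem hβ.1, fun t ht => by
      rw [B.coeff_neg hβ.1 ht]
      have := hneg.2 t ht
      omega⟩
    have hnαl : R.IsLong (-α) := ⟨NRS.neg_mem hα.1, by rw [inner_neg_neg]; exact hα.2⟩
    have hnβl : R.IsLong (-β) := ⟨NRS.neg_mem hβ.1, by rw [inner_neg_neg]; exact hβ.2⟩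
    have hle' : ∀ t ∈ B.Δ, B.coeff (-β) t ≤ B.coeff (-α) t := fun t ht => by
      rw [B.coeff_neg hα.1 ht, B.coeff_neg hβ.1 ht]
      have := hle t ht
      omega
    have hfuel : B.ht (-α) ≤ B.ht (-β) + (B.ht (-α) - B.ht (-β)).toNat := by omega
    obtain ⟨n, g, c, hc0, hcl, hsteps, hgΔ, hcpos⟩ :=
      B.simplePath_aux h (B.ht (-α) - B.ht (-β)).toNat (-β) (-α) hnβl hnαl hnβp hnαp hle' hfuel
    refine ⟨n, fun i => g i.rev, ⟨⟨fun j => -(c j.rev), ?_, ?_, ?_⟩, fun i => hgΔ i.rev⟩⟩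
    · show -(c (Fin.rev 0)) = β
      rw [Fin.rev_zero, hcl, neg_neg]
    · show -(c (Fin.rev (Fin.last n))) = α
      rw [Fin.rev_last, hc0, neg_neg]
    · intro i
      show B.Step h (g i.rev) (-(c i.castSucc.rev)) (-(c i.succ.rev))
      rw [Fin.rev_castSucc, Fin.rev_succ]
      exact B.step_neg (hsteps i.rev) (hcpos _) (hcpos _)
end
end

section
/- With x_{αβ} denoting the unique minimal-length element of W taking β to α when it exists: (a) if α ⪯ β ⪯ γ are long roots such that x_{αβ} and x_{βγ} are defined, then x_{αγ} is defined and x_{αγ} = x_{αβ} x_{βγ} with l(x_{αγ}) = l(x_{αβ}) + l(x_{βγ}); (b) for every positive long root α, x_{−α,α} is defined and equals the reflection s_α; (c) for every long root α, x_{α,α̃} is defined and equals x_α, the unique element of X_Ĩ with x_α(α̃) = α. -/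
open scoped RealInnerProductSpace Classical

noncomputable section

variable {V : Type} [NormedAddCommGroup V] [InnerProductSpace ℝ V] [FiniteDimensional ℝ V]

section Aux

open Finset in
theorem sref_apply'_s16 (a v : V) : sref a v = v - cpair v a • a := by
  classical
  by_cases ha : a = 0
  · subst ha
    have h1 : v ∈ (Submodule.span ℝ ({0} : Set V))ᗮ := by
      simp [Submodule.span_zero_singleton]
    rw [sref, cpair]
    simp only [inner_zero_right, mul_zero, zero_div, zero_smul, sub_zero]
    exact Submodule.reflection_mem_subspace_eq_self h1
  · have h0 : sref a v = -(Submodule.reflection (Submodule.span ℝ {a}) v) := by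
      simpa [sref] using Submodule.reflection_orthogonal_apply (K := Submodule.span ℝ {a}) v
    rw [h0, Submodule.reflection_apply, Submodule.starProjection_singleton]
    simp only [RCLike.ofReal_real_eq_id, id]
    rw [cpair, real_inner_comm a v, ← real_inner_self_eq_norm_sq a, two_smul]
    module

theorem sref_apply_self (a : V) (ha : a ≠ 0) : sref a a = -a :=
  Submodule.reflection_orthogonalComplement_singleton_eq_neg a

theorem sref_mul_self (a : V) : sref a * sref a = 1 := by
  ext v
  exact Submodule.reflection_reflection (Submodule.span ℝ {a})ᗮ v

theorem sref_inv (a : V) : (sref a)⁻¹ = sref a :=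
  eq_comm.mp (eq_inv_of_mul_eq_one_left (sref_mul_self a))

theorem sref_neg (a : V) : sref (-a) = sref a := by
  unfold sref
  congr 1
  congr 1
  ext v
  simp [Submodule.mem_span_singleton]
  constructor
  · rintro ⟨c, rfl⟩; exact ⟨-c, by simp⟩
  · rintro ⟨c, rfl⟩; exact ⟨-c, by simp⟩

theorem sref_conj (w : V ≃ₗᵢ[ℝ] V) (a : V) : sref (w a) = w * sref a * w⁻¹ := by
  ext v
  show sref (w a) v = w (sref a (w⁻¹ v))
  rw [sref_apply'_s16, sref_apply'_s16, map_sub, map_smul]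
  have h1 : w ((w⁻¹ : V ≃ₗᵢ[ℝ] V) v) = v := w.apply_symm_apply v
  have h2 : cpair ((w⁻¹ : V ≃ₗᵢ[ℝ] V) v) a = cpair v (w a) := by
    unfold cpair
    rw [← w.inner_map_map ((w⁻¹ : V ≃ₗᵢ[ℝ] V) v) a, h1, ← w.inner_map_map a a]
  rw [h1, h2]

namespace NRootSystem
variable (R : NRootSystem V)

theorem inner_self_pos' {α : V} (hα : α ∈ R.Φ) : 0 < ⟪α, α⟫ :=
  lt_of_lt_of_le one_pos (R.norm_one_le α hα)

theorem root_ne_zero {α : V} (hα : α ∈ R.Φ) : α ≠ 0 := fun h => R.zero_not_mem (h ▸ hα)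

theorem neg_mem {α : V} (hα : α ∈ R.Φ) : -α ∈ R.Φ := by
  have := R.reflect_mem α hα α hα
  rwa [sref_apply_self α (R.root_ne_zero hα)] at this

theorem cpair_int {α β : V} (hα : α ∈ R.Φ) (hβ : β ∈ R.Φ) : ∃ n : ℤ, cpair β α = n := by
  obtain ⟨n, hn⟩ := R.pairing_int α hα β hβ
  exact ⟨n, by rw [cpair, hn, mul_div_assoc,
    div_self (ne_of_gt (R.inner_self_pos' hα)), mul_one]⟩

end NRootSystem

namespace Base
variable {R : NRootSystem V} (B : Base R)

theorem coeff_unique_s16 {γ : V} (hγ : γ ∈ R.Φ) (f : V → ℝ)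
    (hf : γ = ∑ b ∈ B.Δ, f b • b) : ∀ b ∈ B.Δ, f b = (B.coeff γ b : ℝ) := by
  have h0 : ∑ b ∈ B.Δ, (f b - (B.coeff γ b : ℝ)) • b = 0 := by
    simp only [sub_smul, Finset.sum_sub_distrib]
    rw [← hf, ← B.coeff_spec γ hγ, sub_self]
  have h1 : ∑ i : {x // x ∈ B.Δ}, (f i.1 - (B.coeff γ i.1 : ℝ)) • (i : V) = 0 := by
    rw [Finset.sum_coe_sort B.Δ (fun b => (f b - (B.coeff γ b : ℝ)) • b)]
    exact h0
  intro b hb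
  have h2 := linearIndependent_iff'.mp B.indep Finset.univ
    (fun i => f i.1 - (B.coeff γ i.1 : ℝ)) (by simpa using h1) ⟨b, hb⟩ (Finset.mem_univ _)
  have h3 : f b - (B.coeff γ b : ℝ) = 0 := by simpa using h2
  linarith

theorem coeff_negr {γ : V} (hγ : γ ∈ R.Φ) :
    ∀ b ∈ B.Δ, (B.coeff (-γ) b : ℝ) = -(B.coeff γ b : ℝ) := by
  intro b hb
  refine (B.coeff_unique_s16 (R.neg_mem hγ) (fun b => -(B.coeff γ b : ℝ)) ?_ b hb).symm
  conv_lhs => rw [B.coeff_spec γ hγ]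
  simp [neg_smul]

theorem coeff_simple_s16 {a : V} (ha : a ∈ B.Δ) :
    ∀ b ∈ B.Δ, (B.coeff a b : ℝ) = if b = a then 1 else 0 := by
  intro b hb
  refine (B.coeff_unique_s16 (B.subset ha) (fun b => if b = a then (1:ℝ) else 0) ?_ b hb).symm
  simp [ite_smul, Finset.sum_ite_eq', ha]

theorem coeff_sref_simple {γ a : V} (hγ : γ ∈ R.Φ) (ha : a ∈ B.Δ) :
    ∀ b ∈ B.Δ, (B.coeff (sref a γ) b : ℝ) =
      (B.coeff γ b : ℝ) - (if b = a then cpair γ a else 0) := by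
  intro b hb
  refine (B.coeff_unique_s16 (R.reflect_mem a (B.subset ha) γ hγ)
    (fun b => (B.coeff γ b : ℝ) - (if b = a then cpair γ a else 0)) ?_ b hb).symm
  rw [sref_apply'_s16]
  simp only [sub_smul, Finset.sum_sub_distrib]
  rw [← B.coeff_spec γ hγ]
  congr 1
  simp [ite_smul, Finset.sum_ite_eq', ha]

theorem isPos_or_isNeg {γ : V} (hγ : γ ∈ R.Φ) : B.IsPos γ ∨ B.IsNeg γ := by
  rcases B.coeff_sign γ hγ with h | h
  · exact Or.inl ⟨hγ, h⟩
  · exact Or.inr ⟨hγ, h⟩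

theorem not_isPos_and_isNeg {γ : V} (hγ : γ ∈ R.Φ) : ¬(B.IsPos γ ∧ B.IsNeg γ) := by
  rintro ⟨⟨-, h1⟩, ⟨-, h2⟩⟩
  apply R.root_ne_zero hγ
  rw [B.coeff_spec γ hγ]
  refine Finset.sum_eq_zero fun b hb => ?_
  have : B.coeff γ b = 0 := le_antisymm (h2 b hb) (h1 b hb)
  rw [this]; simp

theorem isNeg_neg {γ : V} (hγ : γ ∈ R.Φ) (h : B.IsPos γ) : B.IsNeg (-γ) := by
  refine ⟨R.neg_mem hγ, fun b hb => ?_⟩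
  have := B.coeff_negr hγ b hb
  have h2 := h.2 b hb
  have : (B.coeff (-γ) b : ℝ) ≤ 0 := by rw [this]; simp; exact_mod_cast h2
  exact_mod_cast this

theorem isPos_neg {γ : V} (hγ : γ ∈ R.Φ) (h : B.IsNeg γ) : B.IsPos (-γ) := by
  refine ⟨R.neg_mem hγ, fun b hb => ?_⟩
  have h1 := B.coeff_negr hγ b hb
  have h2 := h.2 b hb
  have : (0:ℝ) ≤ (B.coeff (-γ) b : ℝ) := by rw [h1]; simp; exact_mod_cast h2
  exact_mod_cast this

theorem not_isPos_of_isNeg {γ : V} (hγ : γ ∈ R.Φ) (h : B.IsNeg γ) : ¬ B.IsPos γ :=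
  fun h' => B.not_isPos_and_isNeg hγ ⟨h', h⟩

end Base

namespace NRootSystem
variable (R : NRootSystem V)

theorem inner_le_r {γ : V} (hγ : γ ∈ R.Φ) : ⟪γ, γ⟫ ≤ R.r :=
  Finset.le_sup' (f := fun α => ⟪α, α⟫) hγ

theorem weyl_root {w : V ≃ₗᵢ[ℝ] V} (hw : w ∈ R.Weyl) {γ : V} (hγ : γ ∈ R.Φ) : w γ ∈ R.Φ := by
  revert γ
  have main : ∀ γ ∈ R.Φ, w γ ∈ R.Φ ∧ w⁻¹ γ ∈ R.Φ := by
    induction hw using Subgroup.closure_induction with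
    | mem x hx =>
      obtain ⟨α, hα, rfl⟩ := hx
      intro γ hγ
      refine ⟨R.reflect_mem α hα γ hγ, ?_⟩
      rw [sref_inv]
      exact R.reflect_mem α hα γ hγ
    | one => intro γ hγ; simpa using hγ
    | mul x y hx hy ihx ihy =>
      intro γ hγ
      constructor
      · exact (ihx (y γ) (ihy γ hγ).1).1
      · rw [mul_inv_rev]
        exact (ihy (x⁻¹ γ) (ihx γ hγ).2).2
    | inv x hx ihx =>
      intro γ hγ
      refine ⟨(ihx γ hγ).2, ?_⟩
      rw [inv_inv]
      exact (ihx γ hγ).1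
  intro γ hγ
  exact (main γ hγ).1

theorem sref_mem_weyl {α : V} (hα : α ∈ R.Φ) : sref α ∈ R.Weyl :=
  Subgroup.subset_closure ⟨α, hα, rfl⟩

theorem isLong_neg {γ : V} (h : R.IsLong γ) : R.IsLong (-γ) :=
  ⟨R.neg_mem h.1, by rw [inner_neg_neg]; exact h.2⟩

theorem isLong_weyl {w : V ≃ₗᵢ[ℝ] V} (hw : w ∈ R.Weyl) {γ : V} (h : R.IsLong γ) :
    R.IsLong (w γ) :=
  ⟨R.weyl_root hw h.1, by rw [w.inner_map_map]; exact h.2⟩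

theorem one_le_r : 1 ≤ R.r := by
  obtain ⟨α, hα⟩ := R.nonempty
  exact le_trans (R.norm_one_le α hα) (R.inner_le_r hα)

/-- the crystallographic bound: the coroot pairing of any root against a long root
not proportional to it is `0` or `±1`. -/
theorem cpair_abs_le_one {α a : V} (hα : R.IsLong α) (ha : a ∈ R.Φ)
    (h1 : a ≠ α) (h2 : a ≠ -α) : |cpair a α| ≤ 1 := by
  obtain ⟨hαΦ, hαr⟩ := hα
  obtain ⟨t, ht⟩ := R.cpair_int hαΦ ha
  have haa : 0 < ⟪a, a⟫ := R.inner_self_pos' ha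
  have hαα : 0 < ⟪α, α⟫ := R.inner_self_pos' hαΦ
  have hcs : ⟪a, α⟫ * ⟪a, α⟫ < ⟪a, a⟫ * ⟪α, α⟫ := by
    rcases lt_or_eq_of_le (real_inner_mul_inner_self_le a α) with h | h
    · exact h
    · exfalso
      have h3 : |⟪a, α⟫| = ‖a‖ * ‖α‖ := by
        have h4 : ⟪a, α⟫ ^ 2 = (‖a‖ * ‖α‖) ^ 2 := by
          rw [mul_pow, ← real_inner_self_eq_norm_sq, ← real_inner_self_eq_norm_sq]
          nlinarith [h]
        rw [← abs_of_nonneg (by positivity : (0:ℝ) ≤ ‖a‖ * ‖α‖)]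
        exact (sq_eq_sq_iff_abs_eq_abs (a := ⟪a, α⟫) (b := ‖a‖ * ‖α‖)).mp h4
      have hq : |⟪a, α⟫ / (‖a‖ * ‖α‖)| = 1 := by
        have hne : (0:ℝ) < ‖a‖ * ‖α‖ :=
          mul_pos (norm_pos_iff.mpr (R.root_ne_zero ha))
            (norm_pos_iff.mpr (R.root_ne_zero hαΦ))
        rw [abs_div, h3, abs_of_nonneg (le_of_lt hne), div_self (ne_of_gt hne)]
      obtain ⟨-, r, hr0, hrα⟩ := (abs_real_inner_div_norm_mul_norm_eq_one_iff a α).mp hq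
      rcases R.reduced a ha r (hrα ▸ hαΦ) with rfl | rfl
      · rw [one_smul] at hrα; exact h1 hrα.symm
      · rw [neg_one_smul] at hrα
        exact h2 (by rw [hrα, neg_neg])
  have hsq : cpair a α ^ 2 < 4 := by
    have e1 : cpair a α ^ 2 = 4 * ⟪a, α⟫ ^ 2 / (⟪α, α⟫ * ⟪α, α⟫) := by
      rw [cpair]; field_simp; ring
    rw [e1]
    rw [div_lt_iff₀ (by positivity)]
    have hle : ⟪a, a⟫ ≤ ⟪α, α⟫ := by rw [hαr]; exact R.inner_le_r ha
    nlinarith [hcs, sq_nonneg ⟪a, α⟫]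
  have htz : t ^ 2 < 4 := by
    have : ((t : ℝ)) ^ 2 < 4 := by rw [← ht]; exact hsq
    exact_mod_cast this
  have habs : |t| ≤ 1 := by
    rcases abs_le.mpr (⟨by nlinarith, by nlinarith⟩ : (-1:ℤ) ≤ t ∧ t ≤ 1) with h
    exact h
  rw [ht, ← Int.cast_abs]
  exact_mod_cast habs

end NRootSystem

namespace Base
variable {R : NRootSystem V} (B : Base R)

theorem coeff_simple_int {a : V} (ha : a ∈ B.Δ) :
    ∀ b ∈ B.Δ, B.coeff a b = if b = a then 1 else 0 := by
  intro b hb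
  have := B.coeff_simple_s16 ha b hb
  split at this <;> split <;> first | (exact_mod_cast this) | simp_all

theorem coeff_neg_int {γ : V} (hγ : γ ∈ R.Φ) :
    ∀ b ∈ B.Δ, B.coeff (-γ) b = -(B.coeff γ b) := by
  intro b hb
  have := B.coeff_negr hγ b hb
  exact_mod_cast this

theorem isPos_simple_s16 {a : V} (ha : a ∈ B.Δ) : B.IsPos a := by
  refine ⟨B.subset ha, fun b hb => ?_⟩
  rw [B.coeff_simple_int ha b hb]
  split <;> norm_num

theorem htv_eq' (γ : V) : B.htv γ = (∑ b ∈ B.Δ, (B.coeff γ b : ℝ) * ⟪b, b⟫) / ⟪γ, γ⟫ := by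
  rw [Base.htv, Finset.sum_div]

theorem htv_simple {a : V} (ha : a ∈ B.Δ) : B.htv a = 1 := by
  have haa : ⟪a, a⟫ ≠ 0 := ne_of_gt (R.inner_self_pos' (B.subset ha))
  rw [B.htv_eq', Finset.sum_congr rfl (fun b hb => by rw [B.coeff_simple_s16 ha b hb])]
  simp only [ite_mul, one_mul, zero_mul, Finset.sum_ite_eq', ha, if_true]
  exact div_self haa

theorem htv_neg_s16 {γ : V} (hγ : γ ∈ R.Φ) : B.htv (-γ) = -B.htv γ := by
  rw [B.htv_eq', B.htv_eq', inner_neg_neg,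
    Finset.sum_congr rfl (fun b hb => by rw [B.coeff_negr hγ b hb])]
  simp [Finset.sum_neg_distrib, neg_div]

theorem htv_sref_simple {γ a : V} (hγ : γ ∈ R.Φ) (ha : a ∈ B.Δ) :
    B.htv (sref a γ) = B.htv γ - cpair a γ := by
  have hip : ⟪sref a γ, sref a γ⟫ = ⟪γ, γ⟫ := (sref a).inner_map_map γ γ
  have haa : ⟪a, a⟫ ≠ 0 := ne_of_gt (R.inner_self_pos' (B.subset ha))
  have hγγ : ⟪γ, γ⟫ ≠ 0 := ne_of_gt (R.inner_self_pos' hγ)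
  rw [B.htv_eq', B.htv_eq', hip,
    Finset.sum_congr rfl (fun b hb => by rw [B.coeff_sref_simple hγ ha b hb])]
  simp only [sub_mul, ite_mul, zero_mul, Finset.sum_sub_distrib, Finset.sum_ite_eq', ha, if_true]
  rw [sub_div]
  congr 1
  rw [cpair, cpair, real_inner_comm γ a]
  field_simp

theorem sref_simple_pos {a γ : V} (ha : a ∈ B.Δ) (hp : B.IsPos γ) (hne : γ ≠ a) :
    B.IsPos (sref a γ) := by
  have hγ : γ ∈ R.Φ := hp.1
  have hmem : sref a γ ∈ R.Φ := R.reflect_mem a (B.subset ha) γ hγ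
  rcases B.isPos_or_isNeg hmem with h | h
  · exact h
  exfalso
  by_cases hex : ∃ b ∈ B.Δ, b ≠ a ∧ 0 < B.coeff γ b
  · obtain ⟨b, hb, hba, hcb⟩ := hex
    have h1 : (B.coeff (sref a γ) b : ℝ) = B.coeff γ b := by
      rw [B.coeff_sref_simple hγ ha b hb, if_neg hba, sub_zero]
    have h2 : B.coeff (sref a γ) b = B.coeff γ b := by exact_mod_cast h1
    have := h.2 b hb
    omega
  · push_neg at hex
    have hzero : ∀ b ∈ B.Δ, b ≠ a → B.coeff γ b = 0 := fun b hb hba =>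
      le_antisymm (hex b hb hba) (hp.2 b hb)
    have hsum : γ = (B.coeff γ a : ℝ) • a := by
      conv_lhs => rw [B.coeff_spec γ hγ]
      rw [Finset.sum_eq_single_of_mem a ha (fun b hb hba => by rw [hzero b hb hba]; simp)]
    rcases R.reduced a (B.subset ha) (B.coeff γ a : ℝ) (by rw [← hsum]; exact hγ) with h1 | h1
    · exact hne (by rw [hsum, h1, one_smul])
    · have : B.coeff γ a = -1 := by exact_mod_cast h1
      have := hp.2 a ha
      omega

theorem sref_simple_neg {a γ : V} (ha : a ∈ B.Δ) (hp : B.IsNeg γ) (hne : γ ≠ -a) :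
    B.IsNeg (sref a γ) := by
  have hγ : γ ∈ R.Φ := hp.1
  have h1 : B.IsPos (sref a (-γ)) := by
    refine B.sref_simple_pos ha (B.isPos_neg hγ hp) ?_
    intro h
    exact hne (by rw [← neg_neg γ, h])
  rw [map_neg] at h1
  have h2 := B.isNeg_neg h1.1 h1
  rwa [neg_neg] at h2

theorem ht_nonneg {β : V} (hβ : B.IsPos β) : 0 ≤ B.ht β :=
  Finset.sum_nonneg fun b hb => hβ.2 b hb

theorem ht_pos_s16 {β : V} (hβ : B.IsPos β) : 0 < B.ht β := by
  rcases lt_or_eq_of_le (B.ht_nonneg hβ) with h | h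
  · exact h
  exfalso
  have hz : ∀ b ∈ B.Δ, B.coeff β b = 0 := by
    intro b hb
    have := (Finset.sum_eq_zero_iff_of_nonneg (fun b hb => hβ.2 b hb)).mp h.symm
    exact this b hb
  apply R.root_ne_zero hβ.1
  rw [B.coeff_spec β hβ.1]
  exact Finset.sum_eq_zero fun b hb => by rw [hz b hb]; simp

theorem exists_simple_inner_pos {β : V} (hβ : B.IsPos β) :
    ∃ a ∈ B.Δ, 0 < B.coeff β a ∧ 0 < ⟪β, a⟫ := by
  have hsum : ⟪β, β⟫ = ∑ b ∈ B.Δ, (B.coeff β b : ℝ) * ⟪β, b⟫ := by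
    have h := B.coeff_spec β hβ.1
    nth_rewrite 2 [h]
    rw [inner_sum]
    exact Finset.sum_congr rfl fun b hb => real_inner_smul_right β b _
  by_contra hex
  push_neg at hex
  have hle : ∑ b ∈ B.Δ, (B.coeff β b : ℝ) * ⟪β, b⟫ ≤ 0 := by
    refine Finset.sum_nonpos fun b hb => ?_
    rcases lt_or_eq_of_le (hβ.2 b hb) with hc | hc
    · have hip := hex b hb hc
      have : (0:ℝ) ≤ (B.coeff β b : ℝ) := by exact_mod_cast le_of_lt hc
      exact mul_nonpos_of_nonneg_of_nonpos this hip
    · rw [← hc]; simp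
  have := R.inner_self_pos' hβ.1
  rw [hsum] at this
  linarith

theorem coeff_sref_simple_int {γ a : V} (hγ : γ ∈ R.Φ) (ha : a ∈ B.Δ) {n : ℤ}
    (hn : cpair γ a = n) :
    ∀ b ∈ B.Δ, B.coeff (sref a γ) b = B.coeff γ b - (if b = a then n else 0) := by
  intro b hb
  have h := B.coeff_sref_simple hγ ha b hb
  rw [hn] at h
  split at h <;> split <;> first | (exact_mod_cast h) | simp_all

theorem ht_sref_lt {γ a : V} (hγ : γ ∈ R.Φ) (ha : a ∈ B.Δ) (hip : 0 < ⟪γ, a⟫) :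
    B.ht (sref a γ) < B.ht γ := by
  obtain ⟨n, hn⟩ := R.cpair_int (B.subset ha) hγ
  have hn1 : 1 ≤ n := by
    have h0 : (0:ℝ) < (n:ℝ) := by
      rw [← hn, cpair]
      exact div_pos (by linarith) (R.inner_self_pos' (B.subset ha))
    exact_mod_cast h0
  have hcoeff := B.coeff_sref_simple_int hγ ha hn
  rw [Base.ht, Base.ht, Finset.sum_congr rfl hcoeff, Finset.sum_sub_distrib,
    Finset.sum_ite_eq' B.Δ a (fun _ => n), if_pos ha]
  omega

end Base

/-- the product of the simple reflections along a list of roots -/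
def swProd (l : List V) : V ≃ₗᵢ[ℝ] V := (l.map sref).prod

theorem swProd_nil : swProd ([] : List V) = 1 := rfl

theorem swProd_cons (a : V) (l : List V) : swProd (a :: l) = sref a * swProd l := by
  simp [swProd]

theorem swProd_append (l₁ l₂ : List V) : swProd (l₁ ++ l₂) = swProd l₁ * swProd l₂ := by
  simp [swProd]

theorem swProd_singleton (a : V) : swProd [a] = sref a := by
  rw [swProd_cons, swProd_nil, mul_one]

theorem swProd_reverse (l : List V) : swProd l.reverse = (swProd l)⁻¹ := by
  induction l with
  | nil => simp [swProd_nil]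
  | cons a l ih =>
    rw [List.reverse_cons, swProd_append, ih, swProd_singleton, swProd_cons, mul_inv_rev,
      sref_inv]

theorem swProd_mem_weyl {R : NRootSystem V} {l : List V} (hl : ∀ a ∈ l, a ∈ R.Φ) :
    swProd l ∈ R.Weyl := by
  induction l with
  | nil => exact Subgroup.one_mem _
  | cons a l ih =>
    rw [swProd_cons]
    exact Subgroup.mul_mem _ (R.sref_mem_weyl (hl a List.mem_cons_self))
      (ih fun b hb => hl b (List.mem_cons_of_mem a hb))

namespace Base
variable {R : NRootSystem V} (B : Base R)

theorem len_eq_sInf_list (w : V ≃ₗᵢ[ℝ] V) :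
    B.len w = sInf {n | ∃ l : List V, (∀ a ∈ l, a ∈ B.Δ) ∧ l.length = n ∧ w = swProd l} := by
  rw [Base.len]
  congr 1
  ext n
  constructor
  · rintro ⟨g, hg, hw⟩
    refine ⟨List.ofFn g, ?_, List.length_ofFn, ?_⟩
    · intro a ha
      obtain ⟨i, rfl⟩ := List.mem_ofFn.mp ha
      exact hg i
    · rw [hw, swProd]
      congr 1
      rw [List.map_ofFn]; rfl
  · rintro ⟨l, hl, rfl, hw⟩
    refine ⟨l.get, fun i => hl _ (List.get_mem l i), ?_⟩
    rw [hw, swProd]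
    congr 1
    rw [show (fun i => sref (l.get i)) = sref ∘ l.get from rfl, ← List.map_ofFn, List.ofFn_get]

theorem len_le_of_word {w : V ≃ₗᵢ[ℝ] V} {l : List V} (hl : ∀ a ∈ l, a ∈ B.Δ)
    (hw : w = swProd l) : B.len w ≤ l.length := by
  rw [B.len_eq_sInf_list]
  exact Nat.sInf_le ⟨l, hl, rfl, hw⟩

theorem len_one : B.len 1 = 0 := by
  have := B.len_le_of_word (l := []) (by simp) swProd_nil.symm
  simpa using this

theorem exists_word_of_mem_weyl {w : V ≃ₗᵢ[ℝ] V} (hw : w ∈ R.Weyl) :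
    ∃ l : List V, (∀ a ∈ l, a ∈ B.Δ) ∧ w = swProd l := by
  -- the set of elements expressible as words in the simple reflections
  have key : ∀ β ∈ R.Φ, ∃ l : List V, (∀ a ∈ l, a ∈ B.Δ) ∧ sref β = swProd l := by
    -- first for positive roots, by induction on the height
    have pos_case : ∀ k : ℕ, ∀ β, B.IsPos β → (B.ht β).toNat = k →
        ∃ l : List V, (∀ a ∈ l, a ∈ B.Δ) ∧ sref β = swProd l := by
      intro k
      induction k using Nat.strong_induction_on with
      | _ k ih =>
        intro β hβ hht
        by_cases hβΔ : β ∈ B.Δ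
        · exact ⟨[β], by simpa using hβΔ, (swProd_singleton β).symm⟩
        · obtain ⟨a, ha, hca, hia⟩ := B.exists_simple_inner_pos hβ
          have hne : β ≠ a := fun h => hβΔ (h ▸ ha)
          have hβ' : B.IsPos (sref a β) := B.sref_simple_pos ha hβ hne
          have hlt : B.ht (sref a β) < B.ht β := B.ht_sref_lt hβ.1 ha hia
          have hpos' : 0 < B.ht (sref a β) := B.ht_pos_s16 hβ'
          have hlt' : (B.ht (sref a β)).toNat < k := by
            rw [← hht]; omega
          obtain ⟨l', hl', hw'⟩ := ih _ hlt' (sref a β) hβ' rfl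
          refine ⟨a :: (l' ++ [a]), ?_, ?_⟩
          · intro b hb
            rcases List.mem_cons.mp hb with rfl | hb
            · exact ha
            rcases List.mem_append.mp hb with hb | hb
            · exact hl' b hb
            · exact (List.mem_singleton.mp hb) ▸ ha
          · have hββ : β = sref a (sref a β) := (Submodule.reflection_reflection _ β).symm
            rw [swProd_cons, swProd_append, swProd_singleton, ← hw']
            conv_lhs => rw [hββ]
            rw [sref_conj (sref a) (sref a β), sref_inv]
            rw [mul_assoc]
    intro β hβ
    rcases B.isPos_or_isNeg hβ with h | h
    · exact pos_case _ β h rfl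
    · obtain ⟨l, hl, hw⟩ := pos_case _ (-β) (B.isPos_neg hβ h) rfl
      exact ⟨l, hl, by rw [← sref_neg, hw]⟩
  induction hw using Subgroup.closure_induction with
  | mem x hx =>
    obtain ⟨α, hα, rfl⟩ := hx
    exact key α hα
  | one => exact ⟨[], by simp, swProd_nil.symm⟩
  | mul x y hx hy ihx ihy =>
    obtain ⟨l₁, hl₁, rfl⟩ := ihx
    obtain ⟨l₂, hl₂, rfl⟩ := ihy
    refine ⟨l₁ ++ l₂, ?_, (swProd_append l₁ l₂).symm⟩
    intro a ha
    rcases List.mem_append.mp ha with h | h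
    exacts [hl₁ a h, hl₂ a h]
  | inv x hx ihx =>
    obtain ⟨l, hl, rfl⟩ := ihx
    exact ⟨l.reverse, fun a ha => hl a (List.mem_reverse.mp ha), (swProd_reverse l).symm⟩

theorem exists_reduced_list {w : V ≃ₗᵢ[ℝ] V} (hw : w ∈ R.Weyl) :
    ∃ l : List V, (∀ a ∈ l, a ∈ B.Δ) ∧ w = swProd l ∧ l.length = B.len w := by
  have hne : {n | ∃ l : List V, (∀ a ∈ l, a ∈ B.Δ) ∧ l.length = n ∧ w = swProd l}.Nonempty := by
    obtain ⟨l, hl, hw'⟩ := B.exists_word_of_mem_weyl hw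
    exact ⟨l.length, l, hl, rfl, hw'⟩
  have := Nat.sInf_mem hne
  rw [← B.len_eq_sInf_list w] at this
  obtain ⟨l, hl, hlen, hw'⟩ := this
  exact ⟨l, hl, hw', hlen⟩

theorem eq_one_of_len_zero {w : V ≃ₗᵢ[ℝ] V} (hw : w ∈ R.Weyl) (h : B.len w = 0) : w = 1 := by
  obtain ⟨l, -, hw', hlen⟩ := B.exists_reduced_list hw
  rw [h, List.length_eq_zero_iff] at hlen
  rw [hw', hlen, swProd_nil]

theorem len_mul_le {w₁ w₂ : V ≃ₗᵢ[ℝ] V} (h₁ : w₁ ∈ R.Weyl) (h₂ : w₂ ∈ R.Weyl) :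
    B.len (w₁ * w₂) ≤ B.len w₁ + B.len w₂ := by
  obtain ⟨l₁, hl₁, hw₁, hlen₁⟩ := B.exists_reduced_list h₁
  obtain ⟨l₂, hl₂, hw₂, hlen₂⟩ := B.exists_reduced_list h₂
  have := B.len_le_of_word (w := w₁ * w₂) (l := l₁ ++ l₂)
    (by intro a ha; rcases List.mem_append.mp ha with h | h; exacts [hl₁ a h, hl₂ a h])
    (by rw [swProd_append, hw₁, hw₂])
  simpa [hlen₁, hlen₂] using this

theorem sref_ne_one {a : V} (ha : a ∈ R.Φ) : sref a ≠ 1 := by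
  intro h
  have h1 : sref a a = a := by rw [h]; rfl
  rw [sref_apply_self a (R.root_ne_zero ha)] at h1
  have h2 : a + a = 0 := by nth_rewrite 1 [← h1]; abel
  have h3 : (2 : ℝ) • a = 0 := by rw [two_smul]; exact h2
  rcases smul_eq_zero.mp h3 with h | h
  · norm_num at h
  · exact R.root_ne_zero ha h

theorem len_sref_simple {a : V} (ha : a ∈ B.Δ) : B.len (sref a) = 1 := by
  have h1 : B.len (sref a) ≤ 1 := by
    simpa using B.len_le_of_word (l := [a]) (by simpa using ha) (swProd_singleton a).symm
  have h0 : B.len (sref a) ≠ 0 := fun h =>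
    sref_ne_one (B.subset ha) (B.eq_one_of_len_zero (R.sref_mem_weyl (B.subset ha)) h)
  omega

end Base

namespace Base
variable {R : NRootSystem V} (B : Base R)

theorem level_of_pos {h α : V} (hp : B.IsPos α) : B.level h α = B.htv h - B.htv α :=
  if_pos hp

theorem level_of_neg {h α : V} (hp : ¬ B.IsPos α) :
    B.level h α = B.htv h - B.htv α - 1 := if_neg hp

theorem level_neg_sub {h α : V} (hα : α ∈ R.Φ) (hp : B.IsPos α) :
    B.level h (-α) - B.level h α = 2 * B.htv α - 1 := by
  rw [B.level_of_pos hp, B.level_of_neg (B.not_isPos_of_isNeg (R.neg_mem hα)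
    (B.isNeg_neg hα hp)), B.htv_neg_s16 hα]
  ring

theorem cpair_pos_simple_eq_one {α a : V} (hα : R.IsLong α) (ha : a ∈ R.Φ)
    (hip : 0 < ⟪α, a⟫) (hne : a ≠ α) : cpair a α = 1 := by
  have h1 : 0 < cpair a α := by
    rw [cpair]
    rw [real_inner_comm a α] at hip
    exact div_pos (by linarith) (R.inner_self_pos' hα.1)
  have hne2 : a ≠ -α := by
    intro hh
    subst hh
    rw [inner_neg_right] at hip
    have := R.inner_self_pos' hα.1
    linarith
  have h2 := R.cpair_abs_le_one hα ha hne hne2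
  obtain ⟨n, hn⟩ := R.cpair_int hα.1 ha
  rw [hn] at h1 h2 ⊢
  have hn1 : 0 < n := by exact_mod_cast h1
  have hn2 : |n| ≤ 1 := by exact_mod_cast h2
  have habs := abs_le.mp hn2
  have : n = 1 := by omega
  rw [this]; norm_num

theorem abs_level_sref_simple_le_one (h : V) {a δ : V} (ha : a ∈ B.Δ) (hδ : R.IsLong δ) :
    |B.level h (sref a δ) - B.level h δ| ≤ 1 := by
  have haΦ : a ∈ R.Φ := B.subset ha
  have hδΦ : δ ∈ R.Φ := hδ.1
  by_cases h1 : δ = a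
  · subst h1
    rw [sref_apply_self δ (R.root_ne_zero hδΦ),
      B.level_neg_sub hδΦ (B.isPos_simple_s16 ha), B.htv_simple ha]
    norm_num
  by_cases h2 : δ = -a
  · subst h2
    have hsr : sref a (-a) = a := by
      rw [map_neg, sref_apply_self a (R.root_ne_zero haΦ), neg_neg]
    rw [hsr]
    have := B.level_neg_sub (h := h) haΦ (B.isPos_simple_s16 ha)
    rw [B.htv_simple ha] at this
    have heq : B.level h a - B.level h (-a) = -1 := by linarith
    rw [heq]; norm_num
  have hκ : |cpair a δ| ≤ 1 := R.cpair_abs_le_one hδ haΦ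
    (fun hh => h1 hh.symm) (fun hh => h2 (by rw [hh, neg_neg]))
  have hhtv : B.htv (sref a δ) = B.htv δ - cpair a δ := B.htv_sref_simple hδΦ ha
  rcases B.isPos_or_isNeg hδΦ with hp | hn
  · have hp' : B.IsPos (sref a δ) := B.sref_simple_pos ha hp h1
    rw [B.level_of_pos hp', B.level_of_pos hp, hhtv]
    simpa using hκ
  · have hn' : B.IsNeg (sref a δ) := B.sref_simple_neg ha hn h2
    rw [B.level_of_neg (B.not_isPos_of_isNeg hn'.1 hn'),
      B.level_of_neg (B.not_isPos_of_isNeg hδΦ hn), hhtv]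
    have : B.htv h - (B.htv δ - cpair a δ) - 1 - (B.htv h - B.htv δ - 1) = cpair a δ := by ring
    rw [this]
    exact hκ

theorem abs_level_swProd_le (h : V) {l : List V} (hl : ∀ a ∈ l, a ∈ B.Δ) {δ : V}
    (hδ : R.IsLong δ) :
    |B.level h (swProd l δ) - B.level h δ| ≤ l.length := by
  induction l with
  | nil => simp [swProd_nil]
  | cons a l ih =>
    have hal : ∀ b ∈ l, b ∈ B.Δ := fun b hb => hl b (List.mem_cons_of_mem a hb)
    have ha : a ∈ B.Δ := hl a List.mem_cons_self
    have hδ' : R.IsLong (swProd l δ) :=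
      R.isLong_weyl (swProd_mem_weyl fun b hb => B.subset (hal b hb)) hδ
    have step := B.abs_level_sref_simple_le_one h ha hδ'
    have tri : |B.level h (sref a (swProd l δ)) - B.level h δ| ≤
        |B.level h (sref a (swProd l δ)) - B.level h (swProd l δ)| +
        |B.level h (swProd l δ) - B.level h δ| := abs_sub_le _ _ _
    have : swProd (a :: l) δ = sref a (swProd l δ) := by rw [swProd_cons]; rfl
    rw [this]
    calc |B.level h (sref a (swProd l δ)) - B.level h δ| ≤ _ + _ := tri
    _ ≤ 1 + l.length := add_le_add step (ih hal)
    _ = ((a :: l).length : ℝ) := by simp [List.length_cons]; ring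

theorem abs_level_le_len (h : V) {w : V ≃ₗᵢ[ℝ] V} (hw : w ∈ R.Weyl) {δ : V}
    (hδ : R.IsLong δ) :
    |B.level h (w δ) - B.level h δ| ≤ B.len w := by
  obtain ⟨l, hl, rfl, hlen⟩ := B.exists_reduced_list hw
  rw [← hlen]
  exact B.abs_level_swProd_le h hl hδ

theorem one_le_htv_and_len_sref_le : ∀ k : ℕ, ∀ α : V, R.IsLong α → B.IsPos α →
    (B.ht α).toNat = k →
    1 ≤ B.htv α ∧ ∃ m : ℕ, (m : ℝ) = 2 * B.htv α - 1 ∧ B.len (sref α) ≤ m := by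
  intro k
  induction k using Nat.strong_induction_on with
  | _ k ih =>
    intro α hlong hpos hht
    by_cases hαΔ : α ∈ B.Δ
    · refine ⟨le_of_eq (B.htv_simple hαΔ).symm, 1, ?_, ?_⟩
      · rw [B.htv_simple hαΔ]; norm_num
      · rw [B.len_sref_simple hαΔ]
    · obtain ⟨a, ha, hca, hia⟩ := B.exists_simple_inner_pos hpos
      have hne : α ≠ a := fun hh => hαΔ (hh ▸ ha)
      have hβpos : B.IsPos (sref a α) := B.sref_simple_pos ha hpos hne
      have hβlong : R.IsLong (sref a α) := R.isLong_weyl (R.sref_mem_weyl (B.subset ha)) hlong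
      have hlt : B.ht (sref a α) < B.ht α := B.ht_sref_lt hpos.1 ha hia
      have hlt' : (B.ht (sref a α)).toNat < k := by
        have := B.ht_pos_s16 hβpos
        omega
      obtain ⟨ih1, m', hm', hlen'⟩ := ih _ hlt' (sref a α) hβlong hβpos rfl
      have hcp : cpair a α = 1 :=
        cpair_pos_simple_eq_one hlong (B.subset ha) hia (fun hh => hne hh.symm)
      have hhtv : B.htv (sref a α) = B.htv α - 1 := by
        rw [B.htv_sref_simple hpos.1 ha, hcp]
      refine ⟨by rw [hhtv] at ih1; linarith, m' + 2, ?_, ?_⟩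
      · push_cast
        rw [hm', hhtv]
        ring
      · have hconj : sref α = sref a * sref (sref a α) * sref a := by
          have hαα : α = sref a (sref a α) := (Submodule.reflection_reflection _ α).symm
          conv_lhs => rw [hαα]
          rw [sref_conj (sref a) (sref a α), sref_inv]
        rw [hconj]
        have hw1 : sref a ∈ R.Weyl := R.sref_mem_weyl (B.subset ha)
        have hw2 : sref (sref a α) ∈ R.Weyl := R.sref_mem_weyl hβlong.1
        calc B.len (sref a * sref (sref a α) * sref a)
            ≤ B.len (sref a * sref (sref a α)) + B.len (sref a) :=
              B.len_mul_le (Subgroup.mul_mem _ hw1 hw2) hw1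
          _ ≤ B.len (sref a) + B.len (sref (sref a α)) + B.len (sref a) :=
              add_le_add_left (B.len_mul_le hw1 hw2) _
          _ ≤ 1 + m' + 1 := by
              rw [B.len_sref_simple ha]
              omega
          _ = m' + 2 := by omega

end Base

namespace Base
variable {R : NRootSystem V} (B : Base R)

theorem level_le_of_hasPath {h β α : V} (hp : B.HasPath h β α) :
    B.level h β ≤ B.level h α := by
  obtain ⟨n, g, c, hc0, hcl, hstep⟩ := hp
  have key : ∀ j : ℕ, ∀ hj : j < n + 1, B.level h β ≤ B.level h (c ⟨j, hj⟩) := by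
    intro j
    induction j with
    | zero => intro hj; rw [show (⟨0, hj⟩ : Fin (n+1)) = 0 from rfl, hc0]
    | succ j ihj =>
      intro hj
      have hjn : j < n := by omega
      have hstepj := (hstep ⟨j, hjn⟩).2.2.2.2
      have e1 : (⟨j, hjn⟩ : Fin n).castSucc = (⟨j, by omega⟩ : Fin (n+1)) := rfl
      have e2 : (⟨j, hjn⟩ : Fin n).succ = (⟨j+1, hj⟩ : Fin (n+1)) := rfl
      rw [e1, e2] at hstepj
      have hih := ihj (by omega)
      rw [hstepj]
      linarith
  have hlast := key n (by omega)
  rw [show (⟨n, by omega⟩ : Fin (n+1)) = Fin.last n from rfl, hcl] at hlast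
  exact hlast

theorem minTake_mul {h : V} {α β γ : V} (hα : R.IsLong α) (hγ : R.IsLong γ)
    (hp₁ : B.HasPath h β α) (hp₂ : B.HasPath h γ β)
    {x₁ x₂ : V ≃ₗᵢ[ℝ] V} (hx₁ : B.MinTake h β α x₁) (hx₂ : B.MinTake h γ β x₂) :
    B.MinTake h γ α (x₁ * x₂) ∧ B.len (x₁ * x₂) = B.len x₁ + B.len x₂ := by
  obtain ⟨hw₁, he₁, hl₁⟩ := hx₁
  obtain ⟨hw₂, he₂, hl₂⟩ := hx₂
  have hwm : x₁ * x₂ ∈ R.Weyl := Subgroup.mul_mem _ hw₁ hw₂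
  have happ : (x₁ * x₂) γ = α := by
    have : (x₁ * x₂) γ = x₁ (x₂ γ) := rfl
    rw [this, he₂, he₁]
  have hm₁ : B.level h β ≤ B.level h α := B.level_le_of_hasPath hp₁
  have hm₂ : B.level h γ ≤ B.level h β := B.level_le_of_hasPath hp₂
  rw [abs_of_nonneg (by linarith)] at hl₁
  rw [abs_of_nonneg (by linarith)] at hl₂
  have hup : (B.len (x₁ * x₂) : ℝ) ≤ B.level h α - B.level h γ := by
    have := B.len_mul_le hw₁ hw₂
    have hcast : (B.len (x₁ * x₂) : ℝ) ≤ (B.len x₁ : ℝ) + (B.len x₂ : ℝ) := by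
      exact_mod_cast this
    linarith
  have hlo : B.level h α - B.level h γ ≤ (B.len (x₁ * x₂) : ℝ) := by
    have := B.abs_level_le_len h hwm hγ
    rw [happ] at this
    calc B.level h α - B.level h γ ≤ |B.level h α - B.level h γ| := le_abs_self _
      _ ≤ _ := this
  have heq : (B.len (x₁ * x₂) : ℝ) = B.level h α - B.level h γ := le_antisymm hup hlo
  constructor
  · exact ⟨hwm, happ, by rw [heq, abs_of_nonneg (by linarith)]⟩
  · have : ((B.len (x₁ * x₂) : ℝ)) = ((B.len x₁ + B.len x₂ : ℕ) : ℝ) := by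
      push_cast
      linarith
    exact_mod_cast this

theorem minTake_sref {h : V} {α : V} (hα : R.IsLong α) (hpos : B.IsPos α) :
    B.MinTake h α (-α) (sref α) := by
  have hαΦ : α ∈ R.Φ := hα.1
  obtain ⟨h1, m, hm, hle⟩ :=
    B.one_le_htv_and_len_sref_le (B.ht α).toNat α hα hpos rfl
  have happ : sref α α = -α := sref_apply_self α (R.root_ne_zero hαΦ)
  have hlev : B.level h (-α) - B.level h α = 2 * B.htv α - 1 := B.level_neg_sub hαΦ hpos
  have hlo : 2 * B.htv α - 1 ≤ (B.len (sref α) : ℝ) := by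
    have := B.abs_level_le_len h (R.sref_mem_weyl hαΦ) hα
    rw [happ, hlev, abs_of_nonneg (by linarith)] at this
    exact this
  have hup : (B.len (sref α) : ℝ) ≤ 2 * B.htv α - 1 := by
    rw [← hm]
    exact_mod_cast hle
  refine ⟨R.sref_mem_weyl hαΦ, happ, ?_⟩
  rw [hlev, abs_of_nonneg (by linarith), le_antisymm hup hlo]

end Base

namespace Base
variable {R : NRootSystem V} (B : Base R)

theorem highest_isPos {h : V} (hh : B.IsHighest h) : B.IsPos h := by
  refine ⟨hh.1, fun b hb => ?_⟩
  have h1 := hh.2 b (B.subset hb) b hb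
  rw [B.coeff_simple_int hb b hb, if_pos rfl] at h1
  omega

theorem highest_dominant {h : V} (hh : B.IsHighest h) : ∀ b ∈ B.Δ, 0 ≤ ⟪h, b⟫ := by
  intro b hb
  by_contra hip
  push_neg at hip
  obtain ⟨n, hn⟩ := R.cpair_int (B.subset hb) hh.1
  have hn0 : n < 0 := by
    have : cpair h b < 0 := div_neg_of_neg_of_pos (by linarith)
      (R.inner_self_pos' (B.subset hb))
    rw [hn] at this
    exact_mod_cast this
  have hc := B.coeff_sref_simple_int hh.1 hb hn b hb
  rw [if_pos rfl] at hc
  have hmax := hh.2 (sref b h) (R.reflect_mem b (B.subset hb) h hh.1) b hb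
  omega

theorem inner_pos_highest_nonneg {h : V} (hh : B.IsHighest h) {δ : V} (hδ : B.IsPos δ) :
    0 ≤ ⟪δ, h⟫ := by
  have hsum : ⟪δ, h⟫ = ∑ b ∈ B.Δ, (B.coeff δ b : ℝ) * ⟪b, h⟫ := by
    nth_rewrite 1 [B.coeff_spec δ hδ.1]
    rw [sum_inner]
    exact Finset.sum_congr rfl fun b hb => real_inner_smul_left b h _
  rw [hsum]
  refine Finset.sum_nonneg fun b hb => mul_nonneg ?_ ?_
  · exact_mod_cast hδ.2 b hb
  · rw [real_inner_comm]; exact B.highest_dominant hh b hb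

theorem mem_span_Itil {h : V} (hh : B.IsHighest h) {δ : V} (hδ : B.IsPos δ)
    (hip : ⟪δ, h⟫ = 0) : δ ∈ Submodule.span ℝ ((B.Itil h : Finset V) : Set V) := by
  have hsum : ⟪δ, h⟫ = ∑ b ∈ B.Δ, (B.coeff δ b : ℝ) * ⟪b, h⟫ := by
    nth_rewrite 1 [B.coeff_spec δ hδ.1]
    rw [sum_inner]
    exact Finset.sum_congr rfl fun b hb => real_inner_smul_left b h _
  have hnn : ∀ b ∈ B.Δ, 0 ≤ (B.coeff δ b : ℝ) * ⟪b, h⟫ := fun b hb => mul_nonneg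
    (by exact_mod_cast hδ.2 b hb)
    (by rw [real_inner_comm]; exact B.highest_dominant hh b hb)
  have hterm : ∀ b ∈ B.Δ, (B.coeff δ b : ℝ) * ⟪b, h⟫ = 0 :=
    (Finset.sum_eq_zero_iff_of_nonneg hnn).mp (by rw [← hsum, hip])
  have hδe : δ = ∑ b ∈ B.Itil h, (B.coeff δ b : ℝ) • b := by
    rw [Base.Itil]
    conv_lhs => rw [B.coeff_spec δ hδ.1]
    rw [Finset.sum_filter_of_ne]
    intro b hb hne
    have hc0 : (B.coeff δ b : ℝ) ≠ 0 := fun hc => hne (by rw [hc, zero_smul])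
    have := hterm b hb
    rcases mul_eq_zero.mp this with hc | hib
    · exact absurd hc hc0
    · rw [real_inner_comm] at hib; exact hib
  rw [hδe]
  exact Submodule.sum_mem _ fun b hb => Submodule.smul_mem _ _
    (Submodule.subset_span (by simpa using hb))

theorem level_highest_self {h : V} (hh : B.IsHighest h) : B.level h h = 0 := by
  rw [B.level_of_pos (B.highest_isPos hh), sub_self]

/-- the flip lemma: if a word sends the positive root `β` to a negative root, then some
prefix of it sends a letter of the word to `β`. -/
theorem exists_flip : ∀ l : List V, (∀ a ∈ l, a ∈ B.Δ) → ∀ β : V, B.IsPos β →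
    B.IsNeg ((swProd l)⁻¹ β) →
    ∃ (l₁ : List V) (c : V) (l₂ : List V), l = l₁ ++ c :: l₂ ∧ (swProd l₁)⁻¹ β = c := by
  intro l
  induction l with
  | nil =>
    intro hl β hβ hneg
    exfalso
    rw [swProd_nil, inv_one] at hneg
    exact B.not_isPos_and_isNeg hβ.1 ⟨hβ, by simpa using hneg⟩
  | cons a l ih =>
    intro hl β hβ hneg
    have ha : a ∈ B.Δ := hl a List.mem_cons_self
    have hrw : (swProd (a :: l))⁻¹ β = (swProd l)⁻¹ (sref a β) := by
      rw [swProd_cons, mul_inv_rev, sref_inv]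
      rfl
    by_cases hba : β = a
    · exact ⟨[], a, l, rfl, by rw [swProd_nil, inv_one]; simpa using hba⟩
    · rw [hrw] at hneg
      have hβ' : B.IsPos (sref a β) := B.sref_simple_pos ha hβ hba
      obtain ⟨l₁, c, l₂, heq, hc⟩ := ih (fun b hb => hl b (List.mem_cons_of_mem a hb))
        (sref a β) hβ' hneg
      refine ⟨a :: l₁, c, l₂, by rw [heq]; rfl, ?_⟩
      rw [swProd_cons, mul_inv_rev, sref_inv]
      show (swProd l₁)⁻¹ (sref a β) = c
      exact hc

theorem len_sref_mul_add_one_le {w : V ≃ₗᵢ[ℝ] V} (hw : w ∈ R.Weyl) {a : V} (ha : a ∈ B.Δ)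
    (hneg : B.IsNeg (w⁻¹ a)) : B.len (sref a * w) + 1 ≤ B.len w := by
  obtain ⟨l, hl, hwl, hlen⟩ := B.exists_reduced_list hw
  obtain ⟨l₁, c, l₂, heq, hc⟩ := B.exists_flip l hl a (B.isPos_simple_s16 ha)
    (by rw [← hwl]; exact hneg)
  have hac : a = swProd l₁ c := by
    rw [← hc]
    exact ((swProd l₁).apply_symm_apply a).symm
  have hsra : sref a = swProd l₁ * sref c * (swProd l₁)⁻¹ := by
    rw [hac, sref_conj]
  have hprod : sref a * w = swProd (l₁ ++ l₂) := by
    rw [hwl, heq, hsra, swProd_append, swProd_append, swProd_cons]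
    have hcc : sref c * sref c = 1 := sref_mul_self c
    calc swProd l₁ * sref c * (swProd l₁)⁻¹ * (swProd l₁ * (sref c * swProd l₂))
        = swProd l₁ * (sref c * sref c) * swProd l₂ := by group
      _ = swProd l₁ * swProd l₂ := by rw [hcc, mul_one]
  have hword : ∀ b ∈ l₁ ++ l₂, b ∈ B.Δ := by
    intro b hb
    apply hl
    rw [heq]
    rcases List.mem_append.mp hb with hb | hb
    · exact List.mem_append_left _ hb
    · exact List.mem_append_right _ (List.mem_cons_of_mem c hb)
  have hle := B.len_le_of_word hword hprod
  have hlength : (l₁ ++ l₂).length + 1 = l.length := by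
    rw [heq]
    simp [List.length_append]
    omega
  omega

end Base

namespace Base
variable {R : NRootSystem V} (B : Base R)

theorem level_eq_len_of_XI {h : V} (hh : B.IsHighest h) :
    ∀ k : ℕ, ∀ x ∈ B.XI (B.Itil h), B.len x = k → R.IsLong (x h) →
      B.level h (x h) = k := by
  intro k
  induction k using Nat.strong_induction_on with
  | _ k ih =>
    intro x hx hlen hlong
    rcases Nat.eq_zero_or_pos k with rfl | hkpos
    · have hx1 : x = 1 := B.eq_one_of_len_zero hx.1 hlen
      subst hx1
      have h1 : (1 : V ≃ₗᵢ[ℝ] V) h = h := rfl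
      rw [h1, B.level_highest_self hh]
      norm_num
    · obtain ⟨l, hl, hwl, hlenl⟩ := B.exists_reduced_list hx.1
      obtain ⟨a, l', rfl⟩ : ∃ a l', l = a :: l' := by
        cases l with
        | nil =>
          exfalso
          rw [hlen] at hlenl
          simp at hlenl
          omega
        | cons a l' => exact ⟨a, l', rfl⟩
      have ha : a ∈ B.Δ := hl a List.mem_cons_self
      have hl' : ∀ b ∈ l', b ∈ B.Δ := fun b hb => hl b (List.mem_cons_of_mem a hb)
      set x' := sref a * x with hx'def
      have hx'w : x' = swProd l' := by
        rw [hx'def, hwl, swProd_cons, ← mul_assoc, sref_mul_self, one_mul]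
      have hx'weyl : x' ∈ R.Weyl := Subgroup.mul_mem _ (R.sref_mem_weyl (B.subset ha)) hx.1
      have hsx : sref a * x' = x := by rw [hx'def, ← mul_assoc, sref_mul_self, one_mul]
      have hlen' : B.len x' = k - 1 := by
        have h1 : B.len x' ≤ l'.length := B.len_le_of_word hl' hx'w
        have h2 : B.len x ≤ B.len (sref a) + B.len x' := by
          conv_lhs => rw [← hsx]
          exact B.len_mul_le (R.sref_mem_weyl (B.subset ha)) hx'weyl
        rw [B.len_sref_simple ha] at h2
        have h3 : l'.length = k - 1 := by
          have h4 : (a :: l').length = k := by rw [hlenl, hlen]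
          simp [List.length_cons] at h4
          omega
        omega
      have hxa_root : x⁻¹ a ∈ R.Φ := R.weyl_root (Subgroup.inv_mem _ hx.1) (B.subset ha)
      have hxia : x (x⁻¹ a) = a := by
        show (x * x⁻¹) a = a
        rw [mul_inv_cancel]
        rfl
      have hneg : B.IsNeg (x⁻¹ a) := by
        rcases B.isPos_or_isNeg hxa_root with hpos | hneg
        · exfalso
          have hwina : x'⁻¹ a = -(x⁻¹ a) := by
            rw [hx'def, mul_inv_rev, sref_inv]
            show x⁻¹ (sref a a) = _
            rw [sref_apply_self a (R.root_ne_zero (B.subset ha)), map_neg]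
          have hneg' : B.IsNeg (x'⁻¹ a) := by
            rw [hwina]; exact B.isNeg_neg hxa_root hpos
          have hcontra := B.len_sref_mul_add_one_le hx'weyl ha hneg'
          rw [hsx, hlen, hlen'] at hcontra
          omega
        · exact hneg
      set α := x h with hαdef
      set δ := -(x⁻¹ a) with hδdef
      have hδpos : B.IsPos δ := B.isPos_neg hxa_root hneg
      have hδh : 0 < ⟪δ, h⟫ := by
        rcases lt_or_eq_of_le (B.inner_pos_highest_nonneg hh hδpos) with hlt | heq0
        · exact hlt
        · exfalso
          have hspan := B.mem_span_Itil hh hδpos heq0.symm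
          have hxδpos := hx.2 δ hδpos.1 hspan hδpos
          have hxδ : x δ = -a := by rw [hδdef, map_neg, hxia]
          rw [hxδ] at hxδpos
          exact B.not_isPos_and_isNeg (R.neg_mem (B.subset ha))
            ⟨hxδpos, B.isNeg_neg (B.subset ha) (B.isPos_simple_s16 ha)⟩
      have hipa : ⟪a, α⟫ < 0 := by
        have h1 : ⟪a, α⟫ = ⟪x (x⁻¹ a), x h⟫ := by rw [hxia]
        rw [h1, x.inner_map_map]
        have h2 : x⁻¹ a = -δ := by rw [hδdef, neg_neg]
        rw [h2, inner_neg_left]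
        linarith
      have hx'XI : x' ∈ B.XI (B.Itil h) := by
        refine ⟨hx'weyl, fun γ hγΦ hγspan hγpos => ?_⟩
        have hxγpos := hx.2 γ hγΦ hγspan hγpos
        have hxγa : x γ ≠ a := by
          intro hcon
          have he : x⁻¹ (x γ) = γ := by
            show (x⁻¹ * x) γ = γ
            rw [inv_mul_cancel]
            rfl
          rw [show γ = x⁻¹ a from by rw [← hcon, he]] at hγpos
          exact B.not_isPos_and_isNeg hxa_root ⟨hγpos, hneg⟩
        have hrw : x' γ = sref a (x γ) := rfl
        rw [hrw]
        exact B.sref_simple_pos ha hxγpos hxγa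
      have hαΦ : α ∈ R.Φ := hlong.1
      have hane : α ≠ a := by
        intro hcon
        rw [hcon] at hipa
        exact absurd hipa (not_lt.mpr (le_of_lt (R.inner_self_pos' (B.subset ha))))
      have hx'h : x' h = sref a α := rfl
      have hlevel : B.level h (sref a α) = B.level h α - 1 := by
        by_cases hana : α = -a
        · rw [hana]
          have hsr : sref a (-a) = a := by
            rw [map_neg, sref_apply_self a (R.root_ne_zero (B.subset ha)), neg_neg]
          rw [hsr]
          have hns := B.level_neg_sub (h := h) (B.subset ha) (B.isPos_simple_s16 ha)
          rw [B.htv_simple ha] at hns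
          linarith
        · have hcp : cpair a α = -1 := by
            obtain ⟨n, hn⟩ := R.cpair_int hαΦ (B.subset ha)
            have h1 : cpair a α < 0 := div_neg_of_neg_of_pos (by linarith)
              (R.inner_self_pos' hαΦ)
            have h2 := R.cpair_abs_le_one hlong (B.subset ha)
              (fun hcon => hane hcon.symm)
              (fun hcon => hana (by rw [hcon, neg_neg]))
            rw [hn] at h1 h2 ⊢
            have h3 : n < 0 := by exact_mod_cast h1
            have h4 : |n| ≤ 1 := by exact_mod_cast h2
            have h5 := abs_le.mp h4
            have h6 : n = -1 := by omega
            rw [h6]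
            norm_num
          have hhtv : B.htv (sref a α) = B.htv α + 1 := by
            rw [B.htv_sref_simple hαΦ ha, hcp]
            ring
          rcases B.isPos_or_isNeg hαΦ with hp | hn2
          · have hp' : B.IsPos (sref a α) := B.sref_simple_pos ha hp hane
            rw [B.level_of_pos hp', B.level_of_pos hp, hhtv]
            ring
          · have hn' : B.IsNeg (sref a α) := B.sref_simple_neg ha hn2 hana
            rw [B.level_of_neg (B.not_isPos_of_isNeg hn'.1 hn'),
              B.level_of_neg (B.not_isPos_of_isNeg hαΦ hn2), hhtv]
            ring
      have hα'long : R.IsLong (x' h) := by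
        rw [hx'h]
        exact R.isLong_weyl (R.sref_mem_weyl (B.subset ha)) hlong
      have ihres := ih (k - 1) (by omega) x' hx'XI hlen' hα'long
      rw [hx'h, hlevel] at ihres
      have hfin : B.level h α = ((k - 1 : ℕ) : ℝ) + 1 := by linarith
      rw [hfin]
      have hk1 : (k - 1 : ℕ) + 1 = k := by omega
      exact_mod_cast hk1

end Base

end Aux

/-- with `x_{αβ}` the unique minimal length element of `W` taking `β`
to `α` when it exists (formalized by the predicate `MinTake`):
(a) if `α ⪯ β ⪯ γ` are long roots such that `x_{αβ}` and `x_{βγ}` are defined, then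
`x_{αγ}` is defined and equals `x_{αβ} x_{βγ}`, with
`l(x_{αγ}) = l(x_{αβ}) + l(x_{βγ})`;
(b) for every positive long root `α`, `x_{−α,α}` is defined and equals `s_α`;
(c) for every long root `α`, `x_{α,α̃}` is defined and equals `x_α`, the unique
element of `X_Ĩ` with `x_α(α̃) = α`. -/
theorem minTake_comp_refl_and_xa (R : NRootSystem V) (B : Base R) {h : V}
    (hh : B.IsHighest h) :
    (∀ α β γ : V, R.IsLong α → R.IsLong β → R.IsLong γ →
      B.HasPath h β α → B.HasPath h γ β →
      ∀ x₁ x₂ : V ≃ₗᵢ[ℝ] V, B.MinTake h β α x₁ → B.MinTake h γ β x₂ →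
        B.MinTake h γ α (x₁ * x₂) ∧ B.len (x₁ * x₂) = B.len x₁ + B.len x₂) ∧
    (∀ α : V, R.IsLong α → B.IsPos α → B.MinTake h α (-α) (sref α)) ∧
    (∀ α : V, R.IsLong α → ∀ x ∈ B.XI (B.Itil h), x h = α → B.MinTake h h α x) := by
  refine ⟨?_, ?_, ?_⟩
  · intro α β γ hα hβ hγ hp₁ hp₂ x₁ x₂ hx₁ hx₂
    exact B.minTake_mul hα hγ hp₁ hp₂ hx₁ hx₂
  · intro α hα hpos
    exact B.minTake_sref hα hpos
  · intro α hα x hx hxh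
    have hlev := B.level_eq_len_of_XI hh (B.len x) x hx rfl (by rw [hxh]; exact hα)
    refine ⟨hx.1, hxh, ?_⟩
    rw [B.level_highest_self hh, sub_zero, ← hxh, hlev, abs_of_nonneg (Nat.cast_nonneg _)]
end
end
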